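/- arXiv:2206.02347 — 9 statements merged into one kernel-verified Lean document; each statement's English description precedes it below -/
import Mathlib

section
/- Let G be a finite nonabelian simple group acting on a set Ω with orbits Δ₁,…,Δ_t, where t ≥ 2. Suppose that (i) for each pair i, j ∈ {1,…,t} there is a point β ∈ Δ_i such that the stabiliser G_β is not transitive on Δ_j, and (ii) for some integer k ≥ 2 and for each i = 1,…,t, the induced permutation group G^{Δ_i} is isomorphic to G (i.e. G acts faithfully on Δ_i) and satisfies (G^{Δ_i})^{(k),Δ_i} = G^{Δ_i}. Then the induced permutation group G^Ω is isomorphic to G and satisfies (G^Ω)^{(k),Ω} = G^Ω. -/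
/-- The `k`-closure of a set `S` of permutations of `Ω`. -/
def kClosure {Ω : Type*} (S : Set (Equiv.Perm Ω)) (k : ℕ) : Set (Equiv.Perm Ω) :=
  {g | ∀ f : Fin k → Ω, ∃ h ∈ S, ∀ i, g (f i) = h (f i)}

/-- The permutation group induced on an invariant subset `S ⊆ Ω` by a group `G` acting
on `Ω`. -/
def inducedPerms (G : Type*) [Group G] {Ω : Type*} [MulAction G Ω] (S : Set Ω) :
    Set (Equiv.Perm S) :=
  {p | ∃ g : G, ∀ x : S, (p x : Ω) = g • (x : Ω)}

/-- In `G × G` with `G` simple, a subgroup containing the diagonal is the diagonal or all. -/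
lemma diag_maximal {G : Type*} [Group G] [IsSimpleGroup G] (H : Subgroup (G × G))
    (hdiag : ∀ g : G, (g, g) ∈ H) :
    (∀ p ∈ H, (p : G × G).1 = p.2) ∨ H = ⊤ := by
  by_cases hc : ∀ p ∈ H, (p : G × G).1 = p.2
  · exact Or.inl hc
  right
  push_neg at hc
  obtain ⟨⟨a, b⟩, hp, hne⟩ := hc
  set N : Subgroup G := H.comap (MonoidHom.inl G G) with hN
  have hNnormal : N.Normal := by
    constructor
    intro n hn g
    have : ((g, g) : G × G) * (n, 1) * (g, g)⁻¹ ∈ H :=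
      H.mul_mem (H.mul_mem (hdiag g) hn) (H.inv_mem (hdiag g))
    simpa [Subgroup.mem_comap, hN] using this
  have hNne : N ≠ ⊥ := by
    intro hbot
    have hmem : a * b⁻¹ ∈ N := by
      have : ((a, b) : G × G) * (b, b)⁻¹ ∈ H := H.mul_mem hp (H.inv_mem (hdiag b))
      simpa [Subgroup.mem_comap, hN] using this
    rw [hbot, Subgroup.mem_bot] at hmem
    exact hne (by rwa [mul_inv_eq_one] at hmem)
  have hNtop : N = ⊤ := (hNnormal.eq_bot_or_eq_top).resolve_left hNne
  ext q
  simp only [Subgroup.mem_top, iff_true]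
  have h1 : (q.1 * q.2⁻¹, (1 : G)) ∈ H := by
    have : q.1 * q.2⁻¹ ∈ N := hNtop ▸ Subgroup.mem_top _
    simpa [Subgroup.mem_comap, hN] using this
  have := H.mul_mem h1 (hdiag q.2)
  simpa using this

/-- Let `G` be a finite nonabelian simple group acting on a set `Ω` with (pairwise distinct)
orbits `Δ₁, …, Δ_t`, `t ≥ 2`. Suppose that (i) for each pair `i, j` there is a point
`β ∈ Δ_i` whose stabiliser is not transitive on `Δ_j`; and (ii) for some `k ≥ 2` and each
`i`, the group `G` acts faithfully on `Δ_i` (so `G^{Δ_i} ≅ G`) and the induced permutation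
group `G^{Δ_i}` equals its own `k`-closure. Then `G` acts faithfully on `Ω` (so `G^Ω ≅ G`)
and `G^Ω` equals its own `k`-closure. -/
theorem kClosure_of_intransitive_simple {G : Type*} [Group G] [Finite G]
    (hnonab : ∃ a b : G, a * b ≠ b * a) (hsimple : IsSimpleGroup G)
    {Ω : Type*} [MulAction G Ω] (t : ℕ) (ht : 2 ≤ t) (Δ : Fin t → Set Ω)
    (horb : ∀ i, ∃ x : Ω, Δ i = MulAction.orbit G x)
    (hcover : ∀ x : Ω, ∃ i, x ∈ Δ i)
    (hdist : Function.Injective Δ)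
    (hstab : ∀ i j, ∃ β ∈ Δ i,
      ¬ (∀ y ∈ Δ j, ∀ z ∈ Δ j, ∃ g : G, g • β = β ∧ g • y = z))
    (k : ℕ) (hk : 2 ≤ k)
    (hfaith : ∀ i, ∀ g : G, (∀ x ∈ Δ i, g • x = x) → g = 1)
    (hclosed : ∀ i, kClosure (inducedPerms G (Δ i)) k = inducedPerms G (Δ i)) :
    (∀ g : G, (∀ x : Ω, g • x = x) → g = 1) ∧
    kClosure (Set.range ⇑(MulAction.toPermHom G Ω)) k =
      Set.range ⇑(MulAction.toPermHom G Ω) := by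
  classical
  have := hsimple
  set S : Set (Equiv.Perm Ω) := Set.range ⇑(MulAction.toPermHom G Ω) with hSdef
  have htoP : ∀ (g : G) (x : Ω), (MulAction.toPermHom G Ω g) x = g • x := fun g x => rfl
  have i0 : Fin t := ⟨0, by omega⟩
  -- basic orbit facts
  have horb' : ∀ i, ∀ x ∈ Δ i, Δ i = MulAction.orbit G x := by
    intro i x hx
    obtain ⟨x₀, h0⟩ := horb i
    rw [h0] at hx ⊢
    exact (MulAction.orbit_eq_iff.mpr hx).symm
  have hsmulmem : ∀ i (g : G), ∀ x ∈ Δ i, g • x ∈ Δ i := by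
    intro i g x hx
    rw [horb' i x hx]
    exact MulAction.mem_orbit x g
  have hfin : ∀ i, (Δ i).Finite := by
    intro i
    obtain ⟨x, hx⟩ := horb i
    rw [hx]
    exact Set.finite_range _
  -- k-closure preserves each orbit
  have hpres : ∀ c ∈ kClosure S k, ∀ i, ∀ x ∈ Δ i, c x ∈ Δ i := by
    intro c hc i x hx
    obtain ⟨h, ⟨g, rfl⟩, hag⟩ := hc (fun _ => x)
    rw [hag ⟨0, by omega⟩, htoP]
    exact hsmulmem i g x hx
  -- existence of an inducing element on each orbit
  have hexist : ∀ c ∈ kClosure S k, ∀ i, ∃ g : G, ∀ x ∈ Δ i, c x = g • x := by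
    intro c hc i
    have hfinI : Finite ↥(Δ i) := (hfin i).to_subtype
    let F : ↥(Δ i) → ↥(Δ i) := fun x => ⟨c x, hpres c hc i x x.2⟩
    have hinj : Function.Injective F := by
      intro a b hab
      exact Subtype.ext (c.injective (congrArg Subtype.val hab))
    let p : Equiv.Perm ↥(Δ i) := Equiv.ofBijective F (Finite.injective_iff_bijective.mp hinj)
    have hp : p ∈ kClosure (inducedPerms G (Δ i)) k := by
      intro f
      obtain ⟨h, ⟨g, rfl⟩, hag⟩ := hc (fun m => (f m : Ω))
      have hginj : Function.Injective
          (fun x : ↥(Δ i) => (⟨g • (x : Ω), hsmulmem i g x x.2⟩ : ↥(Δ i))) := by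
        intro a b hab
        exact Subtype.ext (smul_left_cancel g (congrArg Subtype.val hab))
      refine ⟨Equiv.ofBijective _ (Finite.injective_iff_bijective.mp hginj),
        ⟨g, fun x => rfl⟩, fun m => ?_⟩
      apply Subtype.ext
      show c (f m : Ω) = g • (f m : Ω)
      rw [hag m, htoP]
    rw [hclosed i] at hp
    obtain ⟨g, hg⟩ := hp
    exact ⟨g, fun x hx => hg ⟨x, hx⟩⟩
  -- uniqueness of inducing elements
  have huniq : ∀ i (g g' : G), (∀ x ∈ Δ i, g • x = g' • x) → g = g' := by
    intro i g g' hgg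
    have h1 : g'⁻¹ * g = 1 := by
      apply hfaith i
      intro x hx
      rw [mul_smul, hgg x hx, ← mul_smul, inv_mul_cancel, one_smul]
    have := (inv_mul_eq_one).mp h1
    exact this.symm
  -- the k-closure as a subgroup
  let Csub : Subgroup (Equiv.Perm Ω) :=
  { carrier := kClosure S k
    one_mem' := fun f => ⟨MulAction.toPermHom G Ω 1, ⟨1, rfl⟩, fun m => by
      rw [htoP]; simp⟩
    mul_mem' := by
      intro a b ha hb f
      obtain ⟨hb', ⟨gb, rfl⟩, hagb⟩ := hb f
      obtain ⟨ha', ⟨ga, rfl⟩, haga⟩ := ha (fun m => b (f m))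
      refine ⟨MulAction.toPermHom G Ω (ga * gb), ⟨ga * gb, rfl⟩, fun m => ?_⟩
      show a (b (f m)) = (MulAction.toPermHom G Ω (ga * gb)) (f m)
      rw [haga m, hagb m, htoP, htoP, htoP, mul_smul]
    inv_mem' := by
      intro a ha f
      obtain ⟨h, ⟨g, rfl⟩, hag⟩ := ha (fun m => a⁻¹ (f m))
      refine ⟨MulAction.toPermHom G Ω g⁻¹, ⟨g⁻¹, rfl⟩, fun m => ?_⟩
      have h1 := hag m
      rw [htoP] at h1
      show a⁻¹ (f m) = (MulAction.toPermHom G Ω g⁻¹) (f m)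
      rw [htoP]
      have h2 : a (a⁻¹ (f m)) = f m := Equiv.apply_symm_apply a (f m)
      rw [h2] at h1
      exact eq_inv_smul_iff.mpr h1.symm }
  have hmemC : ∀ c : Csub, (c : Equiv.Perm Ω) ∈ kClosure S k := fun c => c.2
  -- the inducing element on orbit i
  let φ : Fin t → Csub → G := fun i c => Classical.choose (hexist c (hmemC c) i)
  have hφ : ∀ i (c : Csub), ∀ x ∈ Δ i, (c : Equiv.Perm Ω) x = φ i c • x :=
    fun i c => Classical.choose_spec (hexist c (hmemC c) i)
  have hφmul : ∀ i (c d : Csub), φ i (c * d) = φ i c * φ i d := by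
    intro i c d
    apply huniq i
    intro x hx
    have h1 : ((c : Equiv.Perm Ω) * d) x = φ i (c * d) • x := hφ i (c * d) x hx
    have h2 : (d : Equiv.Perm Ω) x ∈ Δ i := hpres d (hmemC d) i x hx
    calc φ i (c * d) • x = (c : Equiv.Perm Ω) ((d : Equiv.Perm Ω) x) := h1.symm
      _ = φ i c • ((d : Equiv.Perm Ω) x) := hφ i c _ h2
      _ = φ i c • (φ i d • x) := by rw [hφ i d x hx]
      _ = (φ i c * φ i d) • x := (mul_smul _ _ _).symm
  have hGmem : ∀ g : G, MulAction.toPermHom G Ω g ∈ Csub :=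
    fun g f => ⟨MulAction.toPermHom G Ω g, ⟨g, rfl⟩, fun _ => rfl⟩
  have hφG : ∀ i (g : G), φ i ⟨MulAction.toPermHom G Ω g, hGmem g⟩ = g := by
    intro i g
    apply huniq i
    intro x hx
    rw [← hφ i ⟨MulAction.toPermHom G Ω g, hGmem g⟩ x hx]
    exact htoP g x
  -- the inducing elements agree across orbits
  have hsame : ∀ i j (c : Csub), φ i c = φ j c := by
    intro i j
    let ψ : Csub →* G × G := MonoidHom.mk' (fun c => (φ i c, φ j c))
      (fun c d => by
        show (φ i (c * d), φ j (c * d)) = (φ i c, φ j c) * (φ i d, φ j d)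
        rw [hφmul, hφmul, Prod.mk_mul_mk])
    have hdiag : ∀ g : G, (g, g) ∈ ψ.range :=
      fun g => ⟨⟨MulAction.toPermHom G Ω g, hGmem g⟩, by
        show (φ i _, φ j _) = (g, g)
        rw [hφG, hφG]⟩
    rcases diag_maximal ψ.range hdiag with hd | htop
    · intro c
      exact hd (ψ c) ⟨c, rfl⟩
    · exfalso
      obtain ⟨β, hβ, hnt⟩ := hstab i j
      apply hnt
      intro y hy z hz
      have hzorb : z ∈ MulAction.orbit G y := by
        rw [← horb' j y hy]; exact hz
      obtain ⟨g₀, hg₀0⟩ := hzorb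
      have hg₀ : g₀ • y = z := hg₀0
      have hsurj : Function.Surjective ψ := MonoidHom.range_eq_top.mp htop
      obtain ⟨c, hc⟩ := hsurj (1, g₀)
      have hci : φ i c = 1 := congrArg Prod.fst hc
      have hcj : φ j c = g₀ := congrArg Prod.snd hc
      obtain ⟨h, ⟨g, rfl⟩, hag⟩ := hmemC c (fun m : Fin k => if (m : ℕ) = 0 then β else y)
      refine ⟨g, ?_, ?_⟩
      · have h0 := hag ⟨0, by omega⟩
        simp only [htoP] at h0
        have : (c : Equiv.Perm Ω) β = g • β := h0
        rw [hφ i c β hβ, hci, one_smul] at this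
        exact this.symm
      · have h1 := hag ⟨1, by omega⟩
        simp only [htoP] at h1
        have : (c : Equiv.Perm Ω) y = g • y := h1
        rw [hφ j c y hy, hcj] at this
        rw [← this, hg₀]
  constructor
  · intro g hg
    exact hfaith i0 g (fun x _ => hg x)
  · apply Set.Subset.antisymm
    · intro c hc
      refine ⟨φ i0 ⟨c, hc⟩, ?_⟩
      ext x
      obtain ⟨i, hx⟩ := hcover x
      rw [htoP, ← hsame i i0 ⟨c, hc⟩, ← hφ i ⟨c, hc⟩ x hx]
    · rintro h ⟨g, rfl⟩
      exact hGmem g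
end

section
/- Let G be a finite nonabelian simple group acting on a set Ω with orbits Δ₁,…,Δ_t, where t ≥ 2, such that the actions of G on the orbits are pairwise equivalent (for each pair of orbits there is a G-equivariant bijection between them). If for some positive integer k and each i the induced permutation group G^{Δ_i} is isomorphic to G and satisfies (G^{Δ_i})^{(k),Δ_i} = G^{Δ_i}, then k ≥ 2 and the induced group G^Ω is isomorphic to G and satisfies (G^Ω)^{(k),Ω} = G^Ω. -/
section Aux

variable {G : Type*} [Group G] {Ω : Type*} [MulAction G Ω]

/-- Restriction of the action of `g` to an invariant subset, as a permutation. -/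
def restrictPerm (S : Set Ω) (hS : ∀ (g : G), ∀ x ∈ S, g • x ∈ S) (g : G) :
    Equiv.Perm S where
  toFun x := ⟨g • (x : Ω), hS g x x.2⟩
  invFun x := ⟨g⁻¹ • (x : Ω), hS g⁻¹ x x.2⟩
  left_inv x := by simp
  right_inv x := by simp

lemma restrictPerm_coe (S : Set Ω) (hS : ∀ (g : G), ∀ x ∈ S, g • x ∈ S) (g : G)
    (x : S) : (restrictPerm S hS g x : Ω) = g • (x : Ω) := rfl

lemma restrictPerm_mem (S : Set Ω) (hS : ∀ (g : G), ∀ x ∈ S, g • x ∈ S) (g : G) :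
    restrictPerm S hS g ∈ inducedPerms G S := ⟨g, fun _ => rfl⟩

lemma restrictPerm_mul (S : Set Ω) (hS : ∀ (g : G), ∀ x ∈ S, g • x ∈ S) (a b : G) :
    restrictPerm S hS (a * b) = restrictPerm S hS a * restrictPerm S hS b := by
  ext x
  simp [restrictPerm_coe, Equiv.Perm.mul_apply, mul_smul]

lemma eq_restrictPerm_of_agree (S : Set Ω) (hS : ∀ (g : G), ∀ x ∈ S, g • x ∈ S)
    (p : Equiv.Perm S) (g : G) (h : ∀ x : S, (p x : Ω) = g • (x : Ω)) :
    p = restrictPerm S hS g := by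
  apply Equiv.ext
  intro x
  exact Subtype.ext (h x)

end Aux

/-- Let `G` be a finite nonabelian simple group acting on a set `Ω` with (pairwise distinct)
orbits `Δ₁, …, Δ_t`, `t ≥ 2`, such that the actions of `G` on the orbits are pairwise
equivalent (there are `G`-equivariant bijections between the orbits). If for some positive
integer `k` and each `i`, the group `G` acts faithfully on `Δ_i` (so `G^{Δ_i} ≅ G`) and the
induced group `G^{Δ_i}` equals its own `k`-closure, then `k ≥ 2`, `G` acts faithfully on `Ω`
(so `G^Ω ≅ G`) and `G^Ω` equals its own `k`-closure. -/
theorem kClosure_of_equivalent_orbits {G : Type*} [Group G] [Finite G]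
    (hnonab : ∃ a b : G, a * b ≠ b * a) (hsimple : IsSimpleGroup G)
    {Ω : Type*} [MulAction G Ω] (t : ℕ) (ht : 2 ≤ t) (Δ : Fin t → Set Ω)
    (horb : ∀ i, ∃ x : Ω, Δ i = MulAction.orbit G x)
    (hcover : ∀ x : Ω, ∃ i, x ∈ Δ i)
    (hdist : Function.Injective Δ)
    (hequiv : ∀ i j, ∃ e : (Δ i) ≃ (Δ j), ∀ (g : G) (x y : Δ i),
      (y : Ω) = g • (x : Ω) → (e y : Ω) = g • (e x : Ω))
    (k : ℕ) (hk : 1 ≤ k)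
    (hfaith : ∀ i, ∀ g : G, (∀ x ∈ Δ i, g • x = x) → g = 1)
    (hclosed : ∀ i, kClosure (inducedPerms G (Δ i)) k = inducedPerms G (Δ i)) :
    2 ≤ k ∧
    (∀ g : G, (∀ x : Ω, g • x = x) → g = 1) ∧
    kClosure (Set.range ⇑(MulAction.toPermHom G Ω)) k =
      Set.range ⇑(MulAction.toPermHom G Ω) := by
  classical
  have ht0 : (0 : ℕ) < t := by omega
  -- each Δ i is invariant under the action
  have hinv : ∀ i, ∀ (g : G), ∀ x ∈ Δ i, g • x ∈ Δ i := by
    intro i g x hx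
    obtain ⟨x₀, hx₀⟩ := horb i
    rw [hx₀] at hx ⊢
    obtain ⟨a, ha⟩ := hx
    exact ⟨g * a, by simp [mul_smul, ha]⟩
  -- transitivity of G on each Δ i
  have htrans : ∀ i, ∀ x ∈ Δ i, ∀ y ∈ Δ i, ∃ g : G, g • x = y := by
    intro i x hx y hy
    obtain ⟨x₀, hx₀⟩ := horb i
    rw [hx₀] at hx hy
    obtain ⟨a, ha⟩ := hx
    obtain ⟨b, hb⟩ := hy
    exact ⟨b * a⁻¹, by simp [mul_smul, ← ha, ← hb]⟩
  -- each Δ i is finite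
  have hfin : ∀ i, Finite (Δ i) := by
    intro i
    obtain ⟨x₀, hx₀⟩ := horb i
    rw [hx₀]
    exact Set.Finite.to_subtype (Set.finite_range _)
  set i₀ : Fin t := ⟨0, ht0⟩ with hi₀
  -- First part: 2 ≤ k.
  have hk2 : 2 ≤ k := by
    by_contra hlt
    have hk1 : k = 1 := by omega
    subst hk1
    -- Build the sign character on G via its action on Δ i₀.
    haveI := hfin i₀
    haveI : Fintype (Δ i₀) := Fintype.ofFinite _
    let f : G →* ℤˣ :=
      { toFun := fun g => Equiv.Perm.sign (restrictPerm (Δ i₀) (hinv i₀) g)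
        map_one' := by
          have : restrictPerm (Δ i₀) (hinv i₀) (1 : G) = 1 := by
            apply Equiv.ext; intro x; exact Subtype.ext (by simp [restrictPerm_coe])
          simp [this]
        map_mul' := by
          intro a b
          show Equiv.Perm.sign (restrictPerm (Δ i₀) (hinv i₀) (a * b)) = Equiv.Perm.sign (restrictPerm (Δ i₀) (hinv i₀) a) * Equiv.Perm.sign (restrictPerm (Δ i₀) (hinv i₀) b)
          rw [restrictPerm_mul, map_mul] }
    have hker := (f.normal_ker).eq_bot_or_eq_top
    rcases hker with hbot | htop
    · -- f injective ⇒ G abelian, contradiction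
      have hinj : Function.Injective f := (MonoidHom.ker_eq_bot_iff f).mp hbot
      obtain ⟨a, b, hab⟩ := hnonab
      exact hab (hinj (by simp [mul_comm (f a) (f b)]))
    · -- all signs are 1, but a transposition is induced
      obtain ⟨a, b, hab⟩ := hnonab
      have ha1 : a ≠ 1 := by rintro rfl; simp at hab
      have : ¬ (∀ x ∈ Δ i₀, a • x = x) := fun h => ha1 (hfaith i₀ a h)
      push_neg at this
      obtain ⟨x, hxΔ, hax⟩ := this
      set x' : Δ i₀ := ⟨x, hxΔ⟩
      set y' : Δ i₀ := ⟨a • x, hinv i₀ a x hxΔ⟩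
      have hxy : x' ≠ y' := by
        intro h
        exact hax (by simpa [x', y', eq_comm] using congrArg Subtype.val h)
      -- the transposition is in the 1-closure, hence induced by some g'
      have hswap : Equiv.swap x' y' ∈ kClosure (inducedPerms G (Δ i₀)) 1 := by
        intro fn
        obtain ⟨g, hg⟩ := htrans i₀ (fn 0 : Ω) (fn 0).2
          (Equiv.swap x' y' (fn 0) : Ω) (Equiv.swap x' y' (fn 0)).2
        refine ⟨restrictPerm (Δ i₀) (hinv i₀) g, restrictPerm_mem _ _ _, ?_⟩
        intro i
        have hi : i = 0 := Subsingleton.elim _ _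
        subst hi
        exact Subtype.ext (by rw [restrictPerm_coe, hg])
      rw [hclosed i₀] at hswap
      obtain ⟨g', hg'⟩ := hswap
      have heq : Equiv.swap x' y' = restrictPerm (Δ i₀) (hinv i₀) g' :=
        eq_restrictPerm_of_agree _ _ _ _ hg'
      have h1 : f g' = 1 := by
        have : g' ∈ f.ker := by rw [htop]; trivial
        exact MonoidHom.mem_ker.mp this
      have hsign : Equiv.Perm.sign (Equiv.swap x' y') = -1 := Equiv.Perm.sign_swap hxy
      rw [heq] at hsign
      have h2 : Equiv.Perm.sign (restrictPerm (Δ i₀) (hinv i₀) g') = 1 := h1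
      rw [h2] at hsign
      exact absurd hsign (by decide)
  refine ⟨hk2, ?_, ?_⟩
  · -- faithfulness on Ω
    intro g hg
    exact hfaith i₀ g (fun x _ => hg x)
  · -- the k-closure statement
    apply Set.Subset.antisymm
    · intro g hg
      -- g preserves each orbit
      have hpres : ∀ i, ∀ x ∈ Δ i, g x ∈ Δ i := by
        intro i x hx
        obtain ⟨h, ⟨g', rfl⟩, hh⟩ := hg (fun _ => x)
        have : g x = g' • x := by
          have := hh ⟨0, by omega⟩
          simpa [MulAction.toPermHom] using this
        rw [this]
        exact hinv i g' x hx
      -- restriction of g to Δ i as a permutation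
      have hrestr : ∀ i, ∃ gi : G, ∀ x : Δ i, g (x : Ω) = gi • (x : Ω) := by
        intro i
        haveI := hfin i
        let φ : Δ i → Δ i := fun x => ⟨g x, hpres i x x.2⟩
        have hφinj : Function.Injective φ := by
          intro a b hab
          have : g (a : Ω) = g (b : Ω) := congrArg Subtype.val hab
          exact Subtype.ext (g.injective this)
        have hφbij : Function.Bijective φ := Finite.injective_iff_bijective.mp hφinj
        let gi : Equiv.Perm (Δ i) := Equiv.ofBijective φ hφbij
        have hgi : gi ∈ kClosure (inducedPerms G (Δ i)) k := by
          intro fn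
          obtain ⟨h, ⟨g', rfl⟩, hh⟩ := hg (fun m => (fn m : Ω))
          refine ⟨restrictPerm (Δ i) (hinv i) g', restrictPerm_mem _ _ _, ?_⟩
          intro m
          refine Subtype.ext ?_
          rw [restrictPerm_coe]
          have := hh m
          show g ((fn m : Δ i) : Ω) = g' • ((fn m : Δ i) : Ω)
          simpa [MulAction.toPermHom] using this
        rw [hclosed i] at hgi
        obtain ⟨g', hg'⟩ := hgi
        exact ⟨g', fun x => hg' x⟩
      choose c hc using hrestr
      -- all the c i coincide
      have hsame : ∀ i, c i = c i₀ := by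
        intro i
        obtain ⟨e, he⟩ := hequiv i i₀
        have key : ∀ x : Δ i, c i • (x : Ω) = c i₀ • (x : Ω) := by
          intro x
          -- consider the pair (x, e x)
          set fn : Fin k → Ω := fun m => if m = ⟨0, by omega⟩ then (x : Ω) else (e x : Ω)
            with hfn
          obtain ⟨h, ⟨g', rfl⟩, hh⟩ := hg fn
          have h0 : g (x : Ω) = g' • (x : Ω) := by
            have := hh ⟨0, by omega⟩
            simpa [hfn, MulAction.toPermHom] using this
          have h1 : g (e x : Ω) = g' • (e x : Ω) := by
            have := hh ⟨1, by omega⟩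
            have hne : (⟨1, by omega⟩ : Fin k) ≠ ⟨0, by omega⟩ := by
              intro hcon; exact absurd (congrArg Fin.val hcon) (by simp)
            simpa [hfn, hne, MulAction.toPermHom] using this
          have hci : c i • (x : Ω) = g' • (x : Ω) := by rw [← hc i x, h0]
          have hci₀ : c i₀ • (e x : Ω) = g' • (e x : Ω) := by rw [← hc i₀ (e x), h1]
          -- use equivariance of e
          set y : Δ i := ⟨g' • (x : Ω), hinv i g' x x.2⟩
          set y' : Δ i := ⟨c i₀ • (x : Ω), hinv i (c i₀) x x.2⟩
          have hey : (e y : Ω) = g' • (e x : Ω) := he g' x y rfl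
          have hey' : (e y' : Ω) = c i₀ • (e x : Ω) := he (c i₀) x y' rfl
          have : (e y' : Ω) = (e y : Ω) := by rw [hey, hey', hci₀]
          have hyy : y' = y := e.injective (Subtype.ext this)
          have : c i₀ • (x : Ω) = g' • (x : Ω) := congrArg Subtype.val hyy
          rw [hci, this]
        have : ∀ z ∈ Δ i, ((c i₀)⁻¹ * c i) • z = z := by
          intro z hz
          rw [mul_smul, key ⟨z, hz⟩, inv_smul_smul]
        have h1 : (c i₀)⁻¹ * c i = 1 := hfaith i _ this
        calc c i = c i₀ * ((c i₀)⁻¹ * c i) := by group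
          _ = c i₀ := by rw [h1, mul_one]
      refine ⟨c i₀, ?_⟩
      apply Equiv.ext
      intro x
      obtain ⟨i, hxi⟩ := hcover x
      have := hc i ⟨x, hxi⟩
      simp only [MulAction.toPermHom] at *
      calc (MulAction.toPermHom G Ω) (c i₀) x = c i₀ • x := rfl
        _ = c i • x := by rw [hsame i]
        _ = g x := (hc i ⟨x, hxi⟩).symm
    · intro g hg
      exact fun fn => ⟨g, hg, fun _ => rfl⟩
end

section
/- Let G be a group acting transitively on a set Ω, let 𝓑 be a nontrivial G-invariant partition of Ω (𝓑 ≠ {Ω} and 𝓑 is not the partition into singletons), and let k be an integer with 2 ≤ k ≤ |𝓑|. Then 𝓑 is invariant under the k-closure G^{(k),Ω}: every g ∈ G^{(k),Ω} permutes the parts of 𝓑. -/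
/-- Let `G ≤ Sym(Ω)` be transitive, let `𝓑` be a nontrivial `G`-invariant partition of `Ω`
(not `{Ω}` and not the partition into singletons), and let `2 ≤ k ≤ |𝓑|`. Then `𝓑` is
invariant under the `k`-closure `G^{(k),Ω}`: every element of `G^{(k),Ω}` permutes the parts
of `𝓑`. -/
theorem kClosure_preserves_partition {Ω : Type*} (G : Subgroup (Equiv.Perm Ω))
    (htrans : ∀ x y : Ω, ∃ g ∈ G, g x = y)
    (𝓑 : Set (Set Ω)) (hpart : Setoid.IsPartition 𝓑)
    (hne_univ : 𝓑 ≠ {Set.univ})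
    (hne_singletons : ¬ ∀ B ∈ 𝓑, ∃ x : Ω, B = {x})
    (hinv : ∀ g ∈ G, ∀ B ∈ 𝓑, (g : Equiv.Perm Ω) '' B ∈ 𝓑)
    (k : ℕ) (hk2 : 2 ≤ k) (hk𝓑 : (k : Cardinal) ≤ Cardinal.mk 𝓑) :
    ∀ g ∈ kClosure (G : Set (Equiv.Perm Ω)) k, ∀ B ∈ 𝓑, g '' B ∈ 𝓑 := by
  intro g hg B hB
  -- key: g agrees with some element of G on any pair of points
  have key : ∀ x y : Ω, ∃ h : Equiv.Perm Ω, h ∈ G ∧ g x = h x ∧ g y = h y := by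
    intro x y
    obtain ⟨h, hhG, hagree⟩ := hg (fun i : Fin k => if (i : ℕ) = 0 then x else y)
    refine ⟨h, hhG, ?_, ?_⟩
    · have := hagree ⟨0, by omega⟩
      simpa using this
    · have := hagree ⟨1, by omega⟩
      simpa using this
  -- B is nonempty
  obtain ⟨x₀, hx₀⟩ := Set.nonempty_iff_ne_empty.mpr (fun h => hpart.1 (h ▸ hB))
  -- B' : block containing g x₀
  obtain ⟨B', ⟨hB'𝓑, hgx₀B'⟩, hB'uniq⟩ := hpart.2 (g x₀)
  have hBuniq : ∀ C ∈ 𝓑, x₀ ∈ C → C = B := by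
    obtain ⟨D, hD, hDuniq⟩ := hpart.2 x₀
    intro C hC hxC
    rw [hDuniq C ⟨hC, hxC⟩, hDuniq B ⟨hB, hx₀⟩]
  suffices h : g '' B = B' by rw [h]; exact hB'𝓑
  apply Set.eq_of_subset_of_subset
  · rintro _ ⟨y, hyB, rfl⟩
    obtain ⟨h, hhG, hx, hy⟩ := key x₀ y
    have himg : h '' B ∈ 𝓑 := hinv h hhG B hB
    have : h '' B = B' := hB'uniq (h '' B) ⟨himg, hx ▸ ⟨x₀, hx₀, rfl⟩⟩
    rw [hy, ← this]
    exact ⟨y, hyB, rfl⟩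
  · intro u huB'
    obtain ⟨h, hhG, hq, hx⟩ := key (g.symm u) x₀
    rw [Equiv.apply_symm_apply] at hq
    have hq' : h.symm u = g.symm u := (Equiv.symm_apply_eq h).mpr hq
    have hinvimg : h.symm '' B' ∈ 𝓑 := hinv h.symm (inv_mem hhG) B' hB'𝓑
    have hx₀mem : x₀ ∈ h.symm '' B' := ⟨g x₀, hgx₀B', by rw [hx]; simp⟩
    have hBeq : h.symm '' B' = B := hBuniq _ hinvimg hx₀mem
    have hmem : g.symm u ∈ B := by
      rw [← hBeq]
      exact ⟨u, huB', hq'⟩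
    exact ⟨g.symm u, hmem, by simp⟩
end

section
/- Let G be a group acting transitively on a set Ω, let 𝓑 be a nontrivial G-invariant partition of Ω, and let k be an integer with 2 ≤ k ≤ |𝓑|. Then the permutation group on 𝓑 induced by the k-closure G^{(k),Ω} is contained in the k-closure of the permutation group induced by G on 𝓑: (G^{(k),Ω})^𝓑 ≤ (G^𝓑)^{(k),𝓑}. -/
/-- The permutation group induced on the parts of a partition `𝓑` of `Ω` by a set `S` of
permutations of `Ω` (each of which permutes the parts of `𝓑`). -/
def inducedOnParts {Ω : Type*} (𝓑 : Set (Set Ω)) (S : Set (Equiv.Perm Ω)) :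
    Set (Equiv.Perm 𝓑) :=
  {P | ∃ g ∈ S, ∀ B : 𝓑, (P B : Set Ω) = g '' (B : Set Ω)}

/-- The permutation of the parts of `𝓑` induced by a permutation `h` that preserves `𝓑`
(in both directions). -/
def permOnParts {Ω : Type*} (𝓑 : Set (Set Ω)) (h : Equiv.Perm Ω)
    (h1 : ∀ B ∈ 𝓑, h '' B ∈ 𝓑) (h2 : ∀ B ∈ 𝓑, ⇑(h⁻¹) '' B ∈ 𝓑) : Equiv.Perm 𝓑 where
  toFun B := ⟨h '' B, h1 B B.2⟩
  invFun B := ⟨⇑(h⁻¹) '' B, h2 B B.2⟩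
  left_inv B := by
    ext x
    simp
  right_inv B := by
    ext x
    simp

/-- Let `G ≤ Sym(Ω)` be transitive, let `𝓑` be a nontrivial `G`-invariant partition of `Ω`,
and let `2 ≤ k ≤ |𝓑|`. Then the permutation group induced on `𝓑` by the `k`-closure
`G^{(k),Ω}` is contained in the `k`-closure of the permutation group induced on `𝓑`
by `G`. -/
theorem inducedOnParts_kClosure_le {Ω : Type*} (G : Subgroup (Equiv.Perm Ω))
    (htrans : ∀ x y : Ω, ∃ g ∈ G, g x = y)
    (𝓑 : Set (Set Ω)) (hpart : Setoid.IsPartition 𝓑)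
    (hne_univ : 𝓑 ≠ {Set.univ})
    (hne_singletons : ¬ ∀ B ∈ 𝓑, ∃ x : Ω, B = {x})
    (hinv : ∀ g ∈ G, ∀ B ∈ 𝓑, (g : Equiv.Perm Ω) '' B ∈ 𝓑)
    (k : ℕ) (hk2 : 2 ≤ k) (hk𝓑 : (k : Cardinal) ≤ Cardinal.mk 𝓑) :
    inducedOnParts 𝓑 (kClosure (G : Set (Equiv.Perm Ω)) k) ⊆
      kClosure (inducedOnParts 𝓑 (G : Set (Equiv.Perm Ω))) k := by
  rintro P ⟨g, hg, hPg⟩ f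
  -- each part is nonempty
  have hne : ∀ i, (f i : Set Ω).Nonempty := by
    intro i
    rcases Set.eq_empty_or_nonempty (f i : Set Ω) with h | h
    · exact absurd (h ▸ (f i).2) hpart.1
    · exact h
  choose x hx using hne
  obtain ⟨h, hhG, hagree⟩ := hg x
  have h1 : ∀ B ∈ 𝓑, h '' B ∈ 𝓑 := hinv h hhG
  have h2 : ∀ B ∈ 𝓑, ⇑(h⁻¹) '' B ∈ 𝓑 := hinv h⁻¹ (G.inv_mem hhG)
  refine ⟨permOnParts 𝓑 h h1 h2, ⟨h, hhG, fun B => rfl⟩, fun i => ?_⟩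
  -- P (f i) and h '' (f i) are both parts containing h (x i) = g (x i)
  apply Subtype.ext
  obtain ⟨B, ⟨hB𝓑, hxB⟩, huniq⟩ := hpart.2 (h (x i))
  have e1 : (P (f i) : Set Ω) = B := by
    refine huniq _ ⟨(P (f i)).2, ?_⟩
    rw [hPg (f i), ← hagree i]
    exact ⟨x i, hx i, rfl⟩
  have e2 : ((permOnParts 𝓑 h h1 h2) (f i) : Set Ω) = B := by
    refine huniq _ ⟨((permOnParts 𝓑 h h1 h2) (f i)).2, ?_⟩
    exact ⟨x i, hx i, rfl⟩
  rw [e1, e2]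
end

section
/- Let G be a group acting transitively on a set Ω, let 𝓑 be a nontrivial G-invariant partition of Ω, let k be an integer with 2 ≤ k ≤ |𝓑|, and let B ∈ 𝓑. Then the permutation group on B induced by the setwise stabiliser of B in the k-closure G^{(k),Ω} is contained in the k-closure on B of the permutation group induced on B by the setwise stabiliser G_B: ((G^{(k),Ω})_B)^B ≤ ((G_B)^B)^{(k),B}. -/
/-- The permutation group induced on a subset `B ⊆ Ω` by the setwise stabiliser of `B` in a
set `S` of permutations of `Ω`. -/
def stabiliserInducedOn {Ω : Type*} (S : Set (Equiv.Perm Ω)) (B : Set Ω) :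
    Set (Equiv.Perm B) :=
  {p | ∃ g ∈ S, (g : Equiv.Perm Ω) '' B = B ∧ ∀ x : B, (p x : Ω) = g x}

/-- Let `G ≤ Sym(Ω)` be transitive, let `𝓑` be a nontrivial `G`-invariant partition of `Ω`,
let `2 ≤ k ≤ |𝓑|`, and let `B ∈ 𝓑`. Then the permutation group induced on `B` by the
setwise stabiliser of `B` in the `k`-closure `G^{(k),Ω}` is contained in the `k`-closure on
`B` of the permutation group induced on `B` by the setwise stabiliser `G_B`. -/
theorem stabiliser_kClosure_le {Ω : Type*} (G : Subgroup (Equiv.Perm Ω))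
    (htrans : ∀ x y : Ω, ∃ g ∈ G, g x = y)
    (𝓑 : Set (Set Ω)) (hpart : Setoid.IsPartition 𝓑)
    (hne_univ : 𝓑 ≠ {Set.univ})
    (hne_singletons : ¬ ∀ B ∈ 𝓑, ∃ x : Ω, B = {x})
    (hinv : ∀ g ∈ G, ∀ B ∈ 𝓑, (g : Equiv.Perm Ω) '' B ∈ 𝓑)
    (k : ℕ) (hk2 : 2 ≤ k) (hk𝓑 : (k : Cardinal) ≤ Cardinal.mk 𝓑)
    (B : Set Ω) (hB : B ∈ 𝓑) :
    stabiliserInducedOn (kClosure (G : Set (Equiv.Perm Ω)) k) B ⊆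
      kClosure (stabiliserInducedOn (G : Set (Equiv.Perm Ω)) B) k := by
  rintro p ⟨g, hg, hgB, hagree⟩
  intro f
  obtain ⟨h, hhG, hhf⟩ := hg (fun i => (f i : Ω))
  have hk0 : (0 : ℕ) < k := by omega
  set a : Ω := (f ⟨0, hk0⟩ : Ω) with ha
  have hB0 : h a ∈ B := by
    rw [← hhf ⟨0, hk0⟩]
    have := Set.mem_image_of_mem g (f ⟨0, hk0⟩).2
    rwa [hgB] at this
  have hhB : h '' B ∈ 𝓑 := hinv h hhG B hB
  have heq : h '' B = B := by
    obtain ⟨b, -, hu⟩ := hpart.2 (h a)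
    have h1 : h '' B = b := hu _ ⟨hhB, ⟨a, (f ⟨0, hk0⟩).2, rfl⟩⟩
    have h2 : B = b := hu _ ⟨hB, hB0⟩
    rw [h1, h2]
  have hmem : ∀ x, x ∈ B ↔ h x ∈ B := by
    intro x
    constructor
    · intro hx; rw [← heq]; exact ⟨x, hx, rfl⟩
    · intro hx; rw [← heq] at hx
      obtain ⟨y, hy, hxy⟩ := hx
      rwa [← h.injective hxy]
  refine ⟨h.subtypePerm (fun x => (hmem x).symm), ⟨h, hhG, heq, fun x => rfl⟩, fun i => ?_⟩
  exact Subtype.ext (by rw [hagree]; exact hhf i)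
end

section
/- Let G be a group acting transitively on a set Ω, let 𝓑 be a nontrivial G-invariant partition of Ω, and let k be an integer with 2 ≤ k ≤ |𝓑|. If there exist parts B₁,…,B_k ∈ 𝓑 whose joint setwise stabiliser in G is trivial (G_{B₁,…,B_k} = 1), then the k-closure G^{(k),Ω} acts faithfully on 𝓑: the only element of G^{(k),Ω} fixing every part of 𝓑 setwise is the identity. -/
/-- Let `G ≤ Sym(Ω)` be transitive, let `𝓑` be a nontrivial `G`-invariant partition of `Ω`,
and let `2 ≤ k ≤ |𝓑|`. If there exist parts `B₁, …, B_k ∈ 𝓑` whose joint setwise stabiliser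
in `G` is trivial, then the `k`-closure `G^{(k),Ω}` acts faithfully on `𝓑`: the only element
of `G^{(k),Ω}` fixing every part of `𝓑` setwise is the identity. -/
theorem kClosure_faithful_on_parts {Ω : Type*} (G : Subgroup (Equiv.Perm Ω))
    (htrans : ∀ x y : Ω, ∃ g ∈ G, g x = y)
    (𝓑 : Set (Set Ω)) (hpart : Setoid.IsPartition 𝓑)
    (hne_univ : 𝓑 ≠ {Set.univ})
    (hne_singletons : ¬ ∀ B ∈ 𝓑, ∃ x : Ω, B = {x})
    (hinv : ∀ g ∈ G, ∀ B ∈ 𝓑, (g : Equiv.Perm Ω) '' B ∈ 𝓑)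
    (k : ℕ) (hk2 : 2 ≤ k) (hk𝓑 : (k : Cardinal) ≤ Cardinal.mk 𝓑)
    (Bs : Fin k → Set Ω) (hBs : ∀ i, Bs i ∈ 𝓑)
    (hstab : ∀ g ∈ G, (∀ i, (g : Equiv.Perm Ω) '' Bs i = Bs i) → g = 1) :
    ∀ g ∈ kClosure (G : Set (Equiv.Perm Ω)) k, (∀ B ∈ 𝓑, g '' B = B) → g = 1 := by
  intro g hg hfix
  -- parts containing a common point are equal
  have huniq : ∀ {P Q : Set Ω}, P ∈ 𝓑 → Q ∈ 𝓑 → ∀ {a : Ω}, a ∈ P → a ∈ Q → P = Q := by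
    intro P Q hP hQ a haP haQ
    obtain ⟨b, ⟨hb𝓑, hab⟩, hbu⟩ := hpart.2 a
    rw [hbu P ⟨hP, haP⟩, hbu Q ⟨hQ, haQ⟩]
  -- each part is nonempty
  have hne : ∀ i, (Bs i).Nonempty := by
    intro i
    rcases Set.eq_empty_or_nonempty (Bs i) with h | h
    · exact absurd (h ▸ hBs i) hpart.1
    · exact h
  choose x hx using hne
  ext α
  simp only [Equiv.Perm.coe_one, id_eq]
  have hk0 : 0 < k := by omega
  obtain ⟨t, htG, htx⟩ := htrans (x ⟨0, hk0⟩) α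
  -- translated blocks
  set C : Fin k → Set Ω := fun i => t '' Bs i with hC
  have hC𝓑 : ∀ i, C i ∈ 𝓑 := fun i => hinv t htG _ (hBs i)
  set f : Fin k → Ω := fun i => t (x i) with hf
  have hfC : ∀ i, f i ∈ C i := fun i => ⟨x i, hx i, rfl⟩
  obtain ⟨h, hhG, hagree⟩ := hg f
  -- g (f i) ∈ C i since g fixes every part
  have hgC : ∀ i, g (f i) ∈ C i := by
    intro i
    have := hfix (C i) (hC𝓑 i)
    rw [← this]
    exact ⟨f i, hfC i, rfl⟩
  -- h fixes each C i setwise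
  have hhC : ∀ i, h '' C i = C i := by
    intro i
    have h1 : h '' C i ∈ 𝓑 := hinv h hhG _ (hC𝓑 i)
    have h2 : g (f i) ∈ h '' C i := ⟨f i, hfC i, (hagree i).symm⟩
    exact huniq h1 (hC𝓑 i) h2 (hgC i)
  -- conjugate: t⁻¹ * h * t fixes each Bs i setwise
  have hu : (t⁻¹ * h * t : Equiv.Perm Ω) = 1 := by
    apply hstab _ (mul_mem (mul_mem (inv_mem htG) hhG) htG)
    intro i
    have : (t⁻¹ * h * t : Equiv.Perm Ω) '' Bs i = (t⁻¹ : Equiv.Perm Ω) '' ((h : Equiv.Perm Ω) '' ((t : Equiv.Perm Ω) '' Bs i)) := by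
      simp [Set.image_image, Equiv.Perm.mul_apply]
    rw [this, hhC i]
    simp [hC, Set.image_image]
  have hh1 : h = 1 := by
    have := congrArg (fun u => t * u * t⁻¹) hu
    simpa [mul_assoc] using this
  have := hagree ⟨0, hk0⟩
  rw [hh1] at this
  simpa [hf, htx] using this
end

section
/- Let G be a finite nonabelian simple group and let b be a positive integer such that every faithful primitive action of G on a set has a base of size at most b. Then G is totally (b+1)-closed; in particular, the closure number satisfies k(G) ≤ b + 1. -/
universe u v

/-- A group `G` is totally `k`-closed if for every set `Ω` on which `G` acts faithfully,
the induced permutation group `G^Ω` equals its own `k`-closure. -/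
def TotallyClosed (G : Type u) [Group G] (k : ℕ) : Prop :=
  ∀ (Ω : Type v) (φ : G →* Equiv.Perm Ω), Function.Injective ⇑φ →
    kClosure (Set.range ⇑φ) k = Set.range ⇑φ

/-- The closure number of a group `G`: the least positive integer `k` such that `G` is
totally `k`-closed. -/
noncomputable def closureNumber (G : Type u) [Group G] : ℕ :=
  sInf {k : ℕ | 0 < k ∧ TotallyClosed.{u, v} G k}

/-- The action of `G` on `Ω` given by `φ : G →* Sym(Ω)` is primitive: it is transitive, and
every block for the action is a singleton (or empty) or the whole of `Ω`. -/
def IsPrimitiveAction {G : Type u} [Group G] {Ω : Type v} (φ : G →* Equiv.Perm Ω) : Prop :=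
  (∀ x y : Ω, ∃ g : G, φ g x = y) ∧
  ∀ B : Set Ω, (∀ g : G, φ g '' B = B ∨ Disjoint (φ g '' B) B) →
    B.Subsingleton ∨ B = Set.univ

section Aux

variable {G : Type u} [Group G]

/-- The stabilizer of a point, as a subgroup. -/
def stabSub {Ω : Type*} (φ : G →* Equiv.Perm Ω) (ω : Ω) : Subgroup G where
  carrier := {g | φ g ω = ω}
  one_mem' := by simp
  mul_mem' := by
    intro a c ha hc
    simp only [Set.mem_setOf_eq] at *
    rw [map_mul, Equiv.Perm.mul_apply, hc, ha]
  inv_mem' := by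
    intro a ha
    simp only [Set.mem_setOf_eq] at *
    conv_lhs => rw [← ha]
    rw [map_inv]
    exact Equiv.symm_apply_apply _ _

@[simp] lemma mem_stabSub {Ω : Type*} {φ : G →* Equiv.Perm Ω} {ω : Ω} {g : G} :
    g ∈ stabSub φ ω ↔ φ g ω = ω := Iff.rfl

/-- The (setwise) stabilizer of a set, as a subgroup. -/
def blockStab {Ω : Type*} (φ : G →* Equiv.Perm Ω) (B : Set Ω) : Subgroup G where
  carrier := {g | φ g '' B = B}
  one_mem' := by simp
  mul_mem' := by
    intro a c ha hc
    simp only [Set.mem_setOf_eq] at *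
    have : ⇑(φ (a * c)) = ⇑(φ a) ∘ ⇑(φ c) := by rw [map_mul]; rfl
    rw [this, Set.image_comp, hc, ha]
  inv_mem' := by
    intro a ha
    simp only [Set.mem_setOf_eq] at *
    conv_lhs => rw [← ha]
    rw [← Set.image_comp]
    have : ⇑(φ a⁻¹) ∘ ⇑(φ a) = id := by
      funext x
      simp only [Function.comp_apply, id, map_inv]
      exact Equiv.symm_apply_apply _ _
    rw [this, Set.image_id]

/-- Transitive with maximal point stabilizers implies primitive. -/
lemma isPrimitiveAction_of_coatom_stab {Ω : Type v} (φ : G →* Equiv.Perm Ω)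
    (htrans : ∀ x y : Ω, ∃ g : G, φ g x = y)
    (hstab : ∀ ω : Ω, IsCoatom (stabSub φ ω)) :
    IsPrimitiveAction φ := by
  refine ⟨htrans, fun B hB => ?_⟩
  by_cases hsub : B.Subsingleton
  · exact Or.inl hsub
  right
  rw [Set.not_subsingleton_iff] at hsub
  obtain ⟨β, hβ, γ, hγ, hβγ⟩ := hsub
  have hle : stabSub φ β ≤ blockStab φ B := by
    intro g hg
    refine (hB g).resolve_right fun hd => ?_
    exact Set.disjoint_left.mp hd ⟨β, hβ, hg⟩ hβ
  have hne : stabSub φ β ≠ blockStab φ B := by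
    obtain ⟨g, hg⟩ := htrans β γ
    intro h
    have hgB : g ∈ blockStab φ B :=
      (hB g).resolve_right fun hd => Set.disjoint_left.mp hd ⟨β, hβ, hg⟩ hγ
    rw [← h] at hgB
    have hgb : φ g β = β := hgB
    exact hβγ (hgb.symm.trans hg)
  have htop : blockStab φ B = ⊤ := (hstab β).2 _ (lt_of_le_of_ne hle hne)
  ext ω
  simp only [Set.mem_univ, iff_true]
  obtain ⟨g, hg⟩ := htrans β ω
  have : g ∈ blockStab φ B := htop ▸ Subgroup.mem_top g
  have : φ g '' B = B := this
  rw [← this]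
  exact ⟨β, hβ, hg⟩

/-- If the whole action has a base of size `b`, then membership in the `(b+1)`-closure
implies membership in the image of `φ`. -/
lemma mem_range_of_base {Ω : Type*} (φ : G →* Equiv.Perm Ω) {b : ℕ} (hb0 : 0 < b)
    (β : Fin b → Ω) (hβ : ∀ g : G, (∀ i, φ g (β i) = β i) → g = 1)
    {x : Equiv.Perm Ω} (hx : x ∈ kClosure (Set.range ⇑φ) (b + 1)) :
    x ∈ Set.range ⇑φ := by
  have key : ∀ ω : Ω, ∃ h : G, (∀ i, x (β i) = φ h (β i)) ∧ x ω = φ h ω := by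
    intro ω
    obtain ⟨p, ⟨h, rfl⟩, hp⟩ := hx (Fin.cons ω β)
    refine ⟨h, fun i => ?_, ?_⟩
    · simpa using hp i.succ
    · simpa using hp 0
  obtain ⟨h₀, hβ₀, _⟩ := key (β ⟨0, hb0⟩)
  refine ⟨h₀, Equiv.ext fun ω => ?_⟩
  obtain ⟨h, hβh, hω⟩ := key ω
  have heq : h₀ = h := by
    have h1 : h₀⁻¹ * h = 1 := by
      apply hβ
      intro i
      rw [map_mul, Equiv.Perm.mul_apply, ← hβh i, hβ₀ i, map_inv]
      exact Equiv.symm_apply_apply _ _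
    exact (inv_mul_eq_one.mp h1)
  rw [heq, ← hω]

end Aux

/-- Let `G` be a finite nonabelian simple group and `b` a positive integer such that every
faithful primitive action of `G` has a base of size at most `b`. Then `G` is totally
`(b+1)`-closed; in particular the closure number satisfies `k(G) ≤ b + 1`. -/
theorem totallyClosed_of_primitive_base_bound (G : Type u) [Group G] [Finite G]
    (hnonab : ∃ a b : G, a * b ≠ b * a) (hsimple : IsSimpleGroup G)
    (b : ℕ) (hb : 0 < b)
    (hbase : ∀ (Ω : Type v) (φ : G →* Equiv.Perm Ω), Function.Injective ⇑φ →
      IsPrimitiveAction φ →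
      ∃ f : Fin b → Ω, ∀ g : G, (∀ i, φ g (f i) = f i) → g = 1) :
    TotallyClosed.{u, v} G (b + 1) ∧ closureNumber.{u, v} G ≤ b + 1 := by
  obtain ⟨a, c, hac⟩ := hnonab
  have ha1 : a ≠ 1 := fun h => hac (by rw [h, one_mul, mul_one])
  have main : TotallyClosed.{u, v} G (b + 1) := by
    intro Ω φ hφ
    apply Set.Subset.antisymm
    · intro x hx
      have hφa : φ a ≠ 1 := fun h => ha1 (hφ (h.trans (map_one φ).symm))
      have hα : ∃ α : Ω, φ a α ≠ α := by
        by_contra h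
        push_neg at h
        exact hφa (Equiv.ext h)
      obtain ⟨α, hαa⟩ := hα
      have hHne : stabSub φ α ≠ ⊤ := by
        intro h
        exact hαa (by have : a ∈ stabSub φ α := h ▸ Subgroup.mem_top a; exact this)
      obtain ⟨M, hM, hHM⟩ := (eq_top_or_exists_le_coatom (stabSub φ α)).resolve_left hHne
      haveI : Fintype (G ⧸ M) := Fintype.ofFinite _
      set Ω' := ULift.{v} (Fin (Fintype.card (G ⧸ M))) with hΩ'
      let e : G ⧸ M ≃ Ω' := (Fintype.equivFin _).trans Equiv.ulift.symm
      let φ' : G →* Equiv.Perm Ω' :=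
      { toFun := fun g => (e.symm.trans (MulAction.toPerm g)).trans e
        map_one' := by ext z; simp
        map_mul' := by intro g h; ext z; simp [mul_smul] }
      have hφ'apply : ∀ (g : G) (z : Ω'), φ' g z = e (g • e.symm z) := fun g z => rfl
      have hstab' : ∀ z : Ω', stabSub φ' z = MulAction.stabilizer G (e.symm z) := by
        intro z
        ext g
        simp only [mem_stabSub, hφ'apply, MulAction.mem_stabilizer_iff]
        constructor
        · intro h
          have := congrArg e.symm h
          simpa using this
        · intro h
          rw [h]
          simp
      have hcoatom : ∀ q : G ⧸ M, IsCoatom (MulAction.stabilizer G q) := by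
        intro q
        obtain ⟨g₀, rfl⟩ := QuotientGroup.mk_surjective q
        have h1 : (QuotientGroup.mk g₀ : G ⧸ M) = g₀ • ((1 : G) : G ⧸ M) := by
          rw [MulAction.Quotient.smul_mk]
          simp [smul_eq_mul]
        rw [h1, MulAction.stabilizer_smul_eq_stabilizer_map_conj, MulAction.stabilizer_quotient]
        have h2 : M.map (MulAut.conj g₀).toMonoidHom =
            (MulEquiv.mapSubgroup (MulAut.conj g₀ : G ≃* G)) M := rfl
        rw [h2, OrderIso.isCoatom_iff]
        exact hM
      have htrans : ∀ x y : Ω', ∃ g : G, φ' g x = y := by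
        intro x y
        obtain ⟨gx, hx'⟩ := QuotientGroup.mk_surjective (e.symm x)
        obtain ⟨gy, hy'⟩ := QuotientGroup.mk_surjective (e.symm y)
        refine ⟨gy * gx⁻¹, ?_⟩
        have hsm : (gy * gx⁻¹) • (QuotientGroup.mk gx : G ⧸ M) = QuotientGroup.mk gy := by
          rw [MulAction.Quotient.smul_mk]
          congr 1
          rw [smul_eq_mul]
          group
        rw [hφ'apply, ← hx', hsm, hy', e.apply_symm_apply]
      have hinj' : Function.Injective ⇑φ' := by
        rw [← MonoidHom.ker_eq_bot_iff]
        rcases hsimple.eq_bot_or_eq_top_of_normal φ'.ker inferInstance with h | h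
        · exact h
        · exfalso
          apply hM.1
          ext g
          simp only [Subgroup.mem_top, iff_true]
          have hg : g ∈ φ'.ker := h ▸ Subgroup.mem_top g
          have h2 : φ' g (e ((1 : G) : G ⧸ M)) = e ((1 : G) : G ⧸ M) := by
            rw [MonoidHom.mem_ker.mp hg]
            rfl
          rw [hφ'apply, e.symm_apply_apply] at h2
          have h3 : g • ((1 : G) : G ⧸ M) = ((1 : G) : G ⧸ M) := e.injective h2
          have h4 : g ∈ MulAction.stabilizer G ((1 : G) : G ⧸ M) := h3
          rwa [MulAction.stabilizer_quotient] at h4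
      have hprim : IsPrimitiveAction φ' :=
        isPrimitiveAction_of_coatom_stab φ' htrans (fun z => by rw [hstab' z]; exact hcoatom _)
      obtain ⟨f', hf'⟩ := hbase Ω' φ' hinj' hprim
      set r : Fin b → G := fun i => (e.symm (f' i)).out with hr
      have hrmk : ∀ i, (QuotientGroup.mk (r i) : G ⧸ M) = e.symm (f' i) := fun i =>
        Quotient.out_eq' _
      have hbaseΩ : ∀ g : G, (∀ i, φ g (φ (r i) α) = φ (r i) α) → g = 1 := by
        intro g hg
        apply hf' g
        intro i
        rw [hφ'apply]
        have h1 : φ ((r i)⁻¹ * g * r i) α = α := by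
          rw [map_mul, map_mul, map_inv, Equiv.Perm.mul_apply, Equiv.Perm.mul_apply, hg i]
          exact Equiv.symm_apply_apply _ _
        have h2 : (r i)⁻¹ * g * r i ∈ M := hHM h1
        have h3 : g • (e.symm (f' i)) = e.symm (f' i) := by
          rw [← hrmk i, MulAction.Quotient.smul_mk, QuotientGroup.eq]
          have h4 : (g • r i)⁻¹ * r i = ((r i)⁻¹ * g * r i)⁻¹ := by
            rw [smul_eq_mul]
            group
          rw [h4]
          exact M.inv_mem h2
        rw [h3, e.apply_symm_apply]
      exact mem_range_of_base φ hb (fun i => φ (r i) α) hbaseΩ hx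
    · rintro _ ⟨h, rfl⟩
      intro f
      exact ⟨φ h, ⟨h, rfl⟩, fun i => rfl⟩
  exact ⟨main, Nat.sInf_le ⟨Nat.succ_pos b, main⟩⟩
end

section
/- Let n ≥ 5, write n = 3m + δ with δ ∈ {0,1,2}, let k be an integer with 2 ≤ k ≤ n/2, and let G be A_n or S_n acting on the set Ω of k-element subsets of {1,…,n}. Then the base size satisfies b(G^Ω) ≤ 2m if δ ∈ {0,1} and b(G^Ω) ≤ 2m + 1 if δ = 2; in particular b(G^Ω) ≤ 2n/3. Moreover b(G^Ω) ≤ n − 2, with equality if and only if (n, k, G) = (6, 2, S_6) or (5, 2, S_5). -/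
open Finset

lemma mem_image_perm {α : Type*} [DecidableEq α] (g : Equiv.Perm α) (s : Finset α) (x : α) :
    g x ∈ s.image g ↔ x ∈ s := by
  simp [Finset.mem_image, g.injective.eq_iff]

/-- Core construction: a separating family. -/
lemma exists_sep_family (n m δ k : ℕ) (hn : 5 ≤ n) (hδ : δ ≤ 2)
    (hnm : n = 3 * m + δ) (hk2 : 2 ≤ k) (hkn : 2 * k ≤ n) :
    (δ ≤ 1 → ∃ f : Fin (2*m) → {s : Finset (Fin n) // s.card = k},
      ∀ x y : Fin n, (∀ i, (x ∈ (f i).1 ↔ y ∈ (f i).1)) → x = y) ∧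
    (∃ f : Fin (2*m+1) → {s : Finset (Fin n) // s.card = k},
      ∀ x y : Fin n, (∀ i, (x ∈ (f i).1 ↔ y ∈ (f i).1)) → x = y) := by
  classical
  have hm : 1 ≤ m := by omega
  have hk2m : k ≤ 2 * m := by omega
  -- the set D of "first and second" points of all triples
  set D : Finset (Fin n) :=
    Finset.image (fun p : Fin m × Bool =>
      (⟨3 * p.1 + (if p.2 then 1 else 0), by have := p.1.isLt; rcases p.2 <;> simp <;> omega⟩ : Fin n))
      Finset.univ with hD
  have hDmem : ∀ x : Fin n, x ∈ D ↔ ∃ s : ℕ, s < m ∧ (x.val = 3*s ∨ x.val = 3*s+1) := by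
    intro x
    constructor
    · intro hx
      rw [hD, Finset.mem_image] at hx
      obtain ⟨⟨⟨s, hs⟩, u⟩, -, hp⟩ := hx
      refine ⟨s, hs, ?_⟩
      have hv := congrArg Fin.val hp
      cases u <;> simp at hv <;> omega
    · rintro ⟨s, hs, hx⟩
      rw [hD, Finset.mem_image]
      rcases hx with hx | hx
      · refine ⟨⟨⟨s, hs⟩, false⟩, Finset.mem_univ _, ?_⟩
        apply Fin.ext
        show 3 * s + (if False then 1 else 0) = x.val
        rw [if_neg (by simp)]; omega
      · refine ⟨⟨⟨s, hs⟩, true⟩, Finset.mem_univ _, ?_⟩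
        apply Fin.ext
        show 3 * s + (if True then 1 else 0) = x.val
        rw [if_pos trivial]; omega
  have hDcard : D.card = 2 * m := by
    rw [hD, Finset.card_image_of_injective _ ?_, Finset.card_univ]
    · simp [Fintype.card_prod]; ring
    · rintro ⟨⟨a, ha⟩, u⟩ ⟨⟨b, hb⟩, v⟩ h
      simp only [Fin.mk.injEq] at h
      rcases u <;> rcases v <;> simp_all <;> omega

  -- padding sets
  have hPex : ∀ t : Fin m, ∃ Pt : Finset (Fin n), Pt.card = k - 2 ∧
      ∀ x ∈ Pt, x ∈ D ∧ x.val ≠ 3*t.val ∧ x.val ≠ 3*t.val+1 := by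
    intro t
    obtain ⟨pa, hpa⟩ : ∃ pa : Fin n, pa.val = 3*t.val :=
      ⟨⟨3*t.val, by have := t.isLt; omega⟩, rfl⟩
    obtain ⟨pb, hpb⟩ : ∃ pb : Fin n, pb.val = 3*t.val+1 :=
      ⟨⟨3*t.val+1, by have := t.isLt; omega⟩, rfl⟩
    have h1 := Finset.pred_card_le_card_erase (s := D) (a := pa)
    have h2 := Finset.pred_card_le_card_erase (s := D.erase pa) (a := pb)
    have hle : k - 2 ≤ ((D.erase pa).erase pb).card := by omega
    obtain ⟨Pt, hsub, hcardPt⟩ := Finset.exists_subset_card_eq hle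
    refine ⟨Pt, hcardPt, ?_⟩
    intro x hx
    have hxe := hsub hx
    rw [Finset.mem_erase, Finset.mem_erase] at hxe
    refine ⟨hxe.2.2, ?_, ?_⟩
    · intro h
      exact hxe.2.1 (Fin.ext (by omega))
    · intro h
      exact hxe.1 (Fin.ext (by omega))
  choose P hPcard hPmem using hPex
  -- structural facts about P
  have hP : ∀ (t : Fin m) (x : Fin n), x ∈ P t →
      x.val < 3*m ∧ x.val % 3 ≠ 2 ∧ x.val / 3 ≠ t.val := by
    intro t x hx
    obtain ⟨hxD, hne1, hne2⟩ := hPmem t x hx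
    obtain ⟨s, hs, hv⟩ := (hDmem x).mp hxD
    refine ⟨by omega, by omega, ?_⟩
    intro h3
    have : x.val = 3*t.val ∨ x.val = 3*t.val + 1 := by omega
    omega
  -- the rows
  set f0 : Fin (2*m) → Finset (Fin n) := fun i =>
    insert (⟨3*(i.val/2) + i.val%2, by have := i.isLt; omega⟩ : Fin n)
      (insert (⟨3*(i.val/2) + 2, by have := i.isLt; omega⟩ : Fin n)
        (P ⟨i.val/2, by have := i.isLt; omega⟩)) with hf0
  have hmem : ∀ (i : Fin (2*m)) (x : Fin n),
      x ∈ f0 i ↔ (x.val = 3*(i.val/2) + i.val%2 ∨ x.val = 3*(i.val/2) + 2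
        ∨ x ∈ P ⟨i.val/2, by have := i.isLt; omega⟩) := by
    intro i x
    rw [hf0]
    simp only [Finset.mem_insert, Fin.ext_iff, Fin.val_mk]
  have hmem' : ∀ (t : Fin m) (e : ℕ) (he : e ≤ 1) (x : Fin n),
      x ∈ f0 ⟨2*t.val+e, by have := t.isLt; omega⟩ ↔
        (x.val = 3*t.val + e ∨ x.val = 3*t.val + 2 ∨ x ∈ P t) := by
    intro t e he x
    rw [hmem]
    have h1 : (2*t.val+e)/2 = t.val := by omega
    have h2 : (2*t.val+e)%2 = e := by omega
    simp only [Fin.val_mk, h1, h2, Fin.eta]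
  have hcard : ∀ i : Fin (2*m), (f0 i).card = k := by
    intro i
    have hi := i.isLt
    rw [hf0]
    have hP1 := hP ⟨i.val/2, by omega⟩
    rw [Finset.card_insert_of_notMem, Finset.card_insert_of_notMem, hPcard]
    · omega
    · intro hmem2
      have := hP1 _ hmem2
      simp only [Fin.val_mk] at this
      omega
    · simp only [Finset.mem_insert, Fin.ext_iff, Fin.val_mk]
      push_neg
      constructor
      · omega
      · intro hmem2
        have := hP1 _ hmem2
        simp only [Fin.val_mk] at this
        omega
  -- key separation steps
  have key2 : ∀ x y : Fin n, (∀ i, (x ∈ f0 i ↔ y ∈ f0 i)) →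
      x.val < 3*m → 3*m ≤ y.val → False := by
    intro x y hag hx hy
    have ht : x.val/3 < m := by omega
    set t : Fin m := ⟨x.val/3, ht⟩ with htdef
    have hyno : ∀ (e : ℕ) (he : e ≤ 1),
        y ∉ f0 ⟨2*t.val+e, by have := t.isLt; omega⟩ := by
      intro e he hyin
      rw [hmem' t e he] at hyin
      have htlt := t.isLt
      rcases hyin with h | h | h
      · omega
      · omega
      · have := hP t y h; omega
    have hx3 : x.val % 3 = 0 ∨ x.val % 3 = 1 ∨ x.val % 3 = 2 := by omega
    have htv : t.val = x.val/3 := rfl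
    rcases hx3 with h3 | h3 | h3
    · exact hyno 0 (by omega) ((hag _).mp ((hmem' t 0 (by omega) x).mpr (by omega)))
    · exact hyno 1 (by omega) ((hag _).mp ((hmem' t 1 (by omega) x).mpr (by omega)))
    · exact hyno 0 (by omega) ((hag _).mp ((hmem' t 0 (by omega) x).mpr (by omega)))
  have key1 : ∀ x y : Fin n, (∀ i, (x ∈ f0 i ↔ y ∈ f0 i)) →
      x.val < 3*m → y.val < 3*m → x.val/3 ≠ y.val/3 → x.val % 3 ≤ 1 → False := by
    intro x y hag hx hy hne h3
    have ht : x.val/3 < m := by omega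
    set t : Fin m := ⟨x.val/3, ht⟩ with htdef
    have htv : t.val = x.val/3 := rfl
    have hxP : x ∉ P t := fun h => (hP t x h).2.2 rfl
    have hyP0 : y ∈ f0 ⟨2*t.val+0, by have := t.isLt; omega⟩ ↔ y ∈ P t := by
      rw [hmem' t 0 (by omega)]
      constructor
      · rintro (h | h | h)
        · exfalso; omega
        · exfalso; omega
        · exact h
      · exact fun h => Or.inr (Or.inr h)
    have hyP1 : y ∈ f0 ⟨2*t.val+1, by have := t.isLt; omega⟩ ↔ y ∈ P t := by
      rw [hmem' t 1 (by omega)]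
      constructor
      · rintro (h | h | h)
        · exfalso; omega
        · exfalso; omega
        · exact h
      · exact fun h => Or.inr (Or.inr h)
    have hx0 : x ∈ f0 ⟨2*t.val+0, by have := t.isLt; omega⟩ ↔ x.val = 3*t.val := by
      rw [hmem' t 0 (by omega)]
      constructor
      · rintro (h | h | h)
        · omega
        · omega
        · exact absurd h hxP
      · exact fun h => Or.inl (by omega)
    have hx1 : x ∈ f0 ⟨2*t.val+1, by have := t.isLt; omega⟩ ↔ x.val = 3*t.val + 1 := by
      rw [hmem' t 1 (by omega)]
      constructor
      · rintro (h | h | h)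
        · omega
        · omega
        · exact absurd h hxP
      · exact fun h => Or.inl (by omega)
    have e0 := (hag ⟨2*t.val+0, by have := t.isLt; omega⟩)
    have e1 := (hag ⟨2*t.val+1, by have := t.isLt; omega⟩)
    rw [hx0, hyP0] at e0
    rw [hx1, hyP1] at e1
    by_cases hyPt : y ∈ P t
    · have h1 : x.val = 3*t.val := e0.mpr hyPt
      have h2 : x.val = 3*t.val + 1 := e1.mpr hyPt
      omega
    · have h1 : ¬ x.val = 3*t.val ∨ ¬ x.val = 3*t.val + 1 := by omega
      rcases h1 with h1 | h1
      · have : x.val = 3*t.val + 1 := by omega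
        exact hyPt (e1.mp this)
      · have : x.val = 3*t.val := by omega
        exact hyPt (e0.mp this)
  have key3 : ∀ x y : Fin n, (∀ i, (x ∈ f0 i ↔ y ∈ f0 i)) →
      x.val < 3*m → y.val < 3*m → x.val/3 ≠ y.val/3 →
      x.val % 3 = 2 → y.val % 3 = 2 → False := by
    intro x y hag hx hy hne h3x h3y
    have ht : x.val/3 < m := by omega
    set t : Fin m := ⟨x.val/3, ht⟩ with htdef
    have htv : t.val = x.val/3 := rfl
    have hxin : x ∈ f0 ⟨2*t.val+0, by have := t.isLt; omega⟩ :=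
      (hmem' t 0 (by omega) x).mpr (by omega)
    have hyin := (hag _).mp hxin
    rw [hmem' t 0 (by omega)] at hyin
    rcases hyin with h | h | h
    · omega
    · omega
    · have := hP t y h; omega
  -- the main separation statement
  have hsep0 : ∀ x y : Fin n, (∀ i, (x ∈ f0 i ↔ y ∈ f0 i)) →
      x = y ∨ (3*m ≤ x.val ∧ 3*m ≤ y.val) := by
    intro x y hag
    have hags : ∀ i, (y ∈ f0 i ↔ x ∈ f0 i) := fun i => (hag i).symm
    by_cases hx : x.val < 3*m
    · by_cases hy : y.val < 3*m
      · by_cases ht : x.val/3 = y.val/3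
        · -- same triple
          left
          have htm : x.val/3 < m := by omega
          set t : Fin m := ⟨x.val/3, htm⟩ with htdef
          have htv : t.val = x.val/3 := rfl
          have hxP : x ∉ P t := fun h => (hP t x h).2.2 rfl
          have hyP : y ∉ P t := fun h => (hP t y h).2.2 (by omega)
          have e0 := hag ⟨2*t.val+0, by have := t.isLt; omega⟩
          have e1 := hag ⟨2*t.val+1, by have := t.isLt; omega⟩
          rw [hmem' t 0 (by omega), hmem' t 0 (by omega)] at e0
          rw [hmem' t 1 (by omega), hmem' t 1 (by omega)] at e1
          have hxP' : (x ∈ P t) = False := by simp [hxP]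
          have hyP' : (y ∈ P t) = False := by simp [hyP]
          rw [hxP', hyP'] at e0 e1
          simp only [or_false] at e0 e1
          apply Fin.ext
          omega
        · rcases Nat.lt_or_ge (x.val % 3) 2 with h3 | h3
          · exact absurd (key1 x y hag hx hy ht (by omega)) not_false
          · rcases Nat.lt_or_ge (y.val % 3) 2 with h3y | h3y
            · exact absurd (key1 y x hags hy hx (Ne.symm ht) (by omega)) not_false
            · exact absurd (key3 x y hag hx hy ht (by omega) (by omega)) not_false
      · exact absurd (key2 x y hag hx (by omega)) not_false
    · by_cases hy : y.val < 3*m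
      · exact absurd (key2 y x hags hy (by omega)) not_false
      · right; omega
  constructor
  · -- δ ≤ 1 case
    intro hδ1
    refine ⟨fun i => ⟨f0 i, hcard i⟩, ?_⟩
    intro x y hag
    rcases hsep0 x y hag with h | h
    · exact h
    · apply Fin.ext
      have hx := x.isLt
      have hy := y.isLt
      omega
  · -- unconditional 2m+1 family
    by_cases hδ2 : δ ≤ 1
    · refine ⟨fun i => if h : i.val < 2*m then ⟨f0 ⟨i.val, h⟩, hcard _⟩
        else ⟨f0 ⟨0, by omega⟩, hcard _⟩, ?_⟩
      intro x y hag
      have hag' : ∀ i : Fin (2*m), (x ∈ f0 i ↔ y ∈ f0 i) := by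
        intro i
        have h2 := hag ⟨i.val, by omega⟩
        simp only [] at h2
        rw [dif_pos i.isLt] at h2
        simpa using h2
      rcases hsep0 x y hag' with h | h
      · exact h
      · apply Fin.ext
        have hx := x.isLt
        have hy := y.isLt
        omega
    · -- δ = 2
      have hδ2' : δ = 2 := by omega
      set Q : Finset (Fin n) :=
        Finset.image (fun j : Fin (k-1) => (⟨j.val, by have := j.isLt; omega⟩ : Fin n))
          Finset.univ with hQdef
      have hQmem : ∀ x : Fin n, x ∈ Q ↔ x.val < k - 1 := by
        intro x
        rw [hQdef, Finset.mem_image]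
        constructor
        · rintro ⟨j, -, hj⟩
          rw [← hj]
          exact j.isLt
        · intro hx
          exact ⟨⟨x.val, hx⟩, Finset.mem_univ _, Fin.ext rfl⟩
      have hQcard : Q.card = k - 1 := by
        rw [hQdef, Finset.card_image_of_injective _ ?_, Finset.card_univ, Fintype.card_fin]
        intro a b hab
        rw [Fin.ext_iff] at hab ⊢
        exact hab
      have h3mn : 3*m < n := by omega
      set C : Finset (Fin n) := insert ⟨3*m, h3mn⟩ Q with hCdef
      have hCcard : C.card = k := by
        rw [hCdef, Finset.card_insert_of_notMem, hQcard]
        · omega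
        · rw [hQmem]
          simp only [Fin.val_mk]
          omega
      have hCmem : ∀ x : Fin n, x ∈ C ↔ (x.val = 3*m ∨ x.val < k - 1) := by
        intro x
        rw [hCdef, Finset.mem_insert, hQmem, Fin.ext_iff]
      refine ⟨fun i => if h : i.val < 2*m then ⟨f0 ⟨i.val, h⟩, hcard _⟩
        else ⟨C, hCcard⟩, ?_⟩
      intro x y hag
      have hag' : ∀ i : Fin (2*m), (x ∈ f0 i ↔ y ∈ f0 i) := by
        intro i
        have h2 := hag ⟨i.val, by omega⟩
        simp only [] at h2
        rw [dif_pos i.isLt] at h2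
        simpa using h2
      rcases hsep0 x y hag' with h | h
      · exact h
      · have hagC := hag ⟨2*m, by omega⟩
        simp only [] at hagC
        rw [dif_neg (lt_irrefl (2*m))] at hagC
        simp only [] at hagC
        rw [hCmem, hCmem] at hagC
        apply Fin.ext
        have hx := x.isLt
        have hy := y.isLt
        omega

set_option maxRecDepth 1000000 in
set_option maxHeartbeats 4000000 in
private lemma W5 : ∀ a b : {s : Finset (Fin 5) // s.card = 2}, ∃ x y : Fin 5, x ≠ y ∧
    ((x ∈ a.1 ↔ y ∈ a.1) ∧ (x ∈ b.1 ↔ y ∈ b.1)) := by decide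

set_option maxRecDepth 1000000 in
set_option maxHeartbeats 4000000 in
private lemma W6 : ∀ a b c : {s : Finset (Fin 6) // s.card = 2}, ∃ x y : Fin 6, x ≠ y ∧
    ((x ∈ a.1 ↔ y ∈ a.1) ∧ (x ∈ b.1 ↔ y ∈ b.1) ∧ (x ∈ c.1 ↔ y ∈ c.1)) := by decide

set_option maxRecDepth 1000000 in
set_option maxHeartbeats 4000000 in
private lemma E63 : ∀ g : Equiv.Perm (Fin 6),
    (Finset.image (⇑g) ({2,4,5} : Finset (Fin 6)) = {2,4,5}) →
    (Finset.image (⇑g) ({1,3,5} : Finset (Fin 6)) = {1,3,5}) →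
    (Finset.image (⇑g) ({0,3,4} : Finset (Fin 6)) = {0,3,4}) → g = 1 := by decide

set_option maxRecDepth 1000000 in
set_option maxHeartbeats 4000000 in
private lemma E62A : ∀ g : Equiv.Perm (Fin 6), Equiv.Perm.sign g = 1 →
    (Finset.image (⇑g) ({0,1} : Finset (Fin 6)) = {0,1}) →
    (Finset.image (⇑g) ({1,2} : Finset (Fin 6)) = {1,2}) →
    (Finset.image (⇑g) ({2,3} : Finset (Fin 6)) = {2,3}) → g = 1 := by decide

set_option maxRecDepth 1000000 in
set_option maxHeartbeats 4000000 in
private lemma E52A : ∀ g : Equiv.Perm (Fin 5), Equiv.Perm.sign g = 1 →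
    (Finset.image (⇑g) ({0,1} : Finset (Fin 5)) = {0,1}) →
    (Finset.image (⇑g) ({1,2} : Finset (Fin 5)) = {1,2}) → g = 1 := by decide

private lemma sep_mem {n k c : ℕ} (G : Subgroup (Equiv.Perm (Fin n)))
    (f : Fin c → {s : Finset (Fin n) // s.card = k})
    (hsep : ∀ x y : Fin n, (∀ i, (x ∈ (f i).1 ↔ y ∈ (f i).1)) → x = y) :
    ∀ g ∈ G, (∀ i, Finset.image (⇑g) (f i).1 = (f i).1) → g = 1 := by
  intro g hg hfix
  apply Equiv.ext
  intro x
  refine hsep (g x) x ?_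
  intro i
  have h2 := mem_image_perm g (f i).1 x
  rw [hfix i] at h2
  exact h2

private lemma pad_mem {n k : ℕ} (G : Subgroup (Equiv.Perm (Fin n))) {c c' : ℕ}
    (hcc : c ≤ c') (hkn : k ≤ n)
    (h : ∃ f : Fin c → {s : Finset (Fin n) // s.card = k},
      ∀ g ∈ G, (∀ i, Finset.image (⇑g) (f i).1 = (f i).1) → g = 1) :
    ∃ f : Fin c' → {s : Finset (Fin n) // s.card = k},
      ∀ g ∈ G, (∀ i, Finset.image (⇑g) (f i).1 = (f i).1) → g = 1 := by
  obtain ⟨f, hf⟩ := h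
  obtain ⟨s0, -, hs0⟩ := Finset.exists_subset_card_eq
    (show k ≤ (Finset.univ : Finset (Fin n)).card by simpa using hkn)
  refine ⟨fun i => if h : i.val < c then f ⟨i.val, h⟩ else ⟨s0, hs0⟩, ?_⟩
  intro g hg hfix
  apply hf g hg
  intro j
  have h2 := hfix ⟨j.val, by omega⟩
  simp only [] at h2
  rw [dif_pos j.isLt] at h2
  simpa using h2

private lemma swap_image {α : Type*} [DecidableEq α] {x y : α} {s : Finset α}
    (h : x ∈ s ↔ y ∈ s) : s.image (⇑(Equiv.swap x y)) = s := by
  have hsub : s.image (⇑(Equiv.swap x y)) ⊆ s := by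
    intro z hz
    rw [Finset.mem_image] at hz
    obtain ⟨w, hw, rfl⟩ := hz
    rcases eq_or_ne w x with rfl | hwx
    · rw [Equiv.swap_apply_left]; exact h.mp hw
    rcases eq_or_ne w y with rfl | hwy
    · rw [Equiv.swap_apply_right]; exact h.mpr hw
    · rw [Equiv.swap_apply_of_ne_of_ne hwx hwy]; exact hw
  exact (Finset.eq_of_subset_of_card_le hsub
    (le_of_eq (Finset.card_image_of_injective s (Equiv.injective _)).symm))

private lemma ex62A : ∃ f : Fin 3 → {s : Finset (Fin 6) // s.card = 2},
    ∀ g ∈ alternatingGroup (Fin 6), (∀ i, Finset.image (⇑g) (f i).1 = (f i).1) → g = 1 := by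
  refine ⟨![⟨{0,1}, by decide⟩, ⟨{1,2}, by decide⟩, ⟨{2,3}, by decide⟩], ?_⟩
  intro g hg hfix
  exact E62A g (Equiv.Perm.mem_alternatingGroup.mp hg) (hfix 0) (hfix 1) (hfix 2)

private lemma ex63 (G : Subgroup (Equiv.Perm (Fin 6))) :
    ∃ f : Fin 3 → {s : Finset (Fin 6) // s.card = 3},
    ∀ g ∈ G, (∀ i, Finset.image (⇑g) (f i).1 = (f i).1) → g = 1 := by
  refine ⟨![⟨{2,4,5}, by decide⟩, ⟨{1,3,5}, by decide⟩, ⟨{0,3,4}, by decide⟩], ?_⟩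
  intro g _ hfix
  exact E63 g (hfix 0) (hfix 1) (hfix 2)

private lemma ex52A : ∃ f : Fin 2 → {s : Finset (Fin 5) // s.card = 2},
    ∀ g ∈ alternatingGroup (Fin 5), (∀ i, Finset.image (⇑g) (f i).1 = (f i).1) → g = 1 := by
  refine ⟨![⟨{0,1}, by decide⟩, ⟨{1,2}, by decide⟩], ?_⟩
  intro g hg hfix
  exact E52A g (Equiv.Perm.mem_alternatingGroup.mp hg) (hfix 0) (hfix 1)

private lemma low6 : ¬ ∃ f : Fin 3 → {s : Finset (Fin 6) // s.card = 2},
    ∀ g ∈ (⊤ : Subgroup (Equiv.Perm (Fin 6))),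
      (∀ i, Finset.image (⇑g) (f i).1 = (f i).1) → g = 1 := by
  rintro ⟨f, hf⟩
  obtain ⟨x, y, hxy, h0, h1, h2⟩ := W6 (f 0) (f 1) (f 2)
  have hone := hf (Equiv.swap x y) (Subgroup.mem_top _) ?_
  · exact hxy (Equiv.swap_eq_one_iff.mp hone)
  · intro i
    fin_cases i
    · exact swap_image h0
    · exact swap_image h1
    · exact swap_image h2

private lemma low5 : ¬ ∃ f : Fin 2 → {s : Finset (Fin 5) // s.card = 2},
    ∀ g ∈ (⊤ : Subgroup (Equiv.Perm (Fin 5))),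
      (∀ i, Finset.image (⇑g) (f i).1 = (f i).1) → g = 1 := by
  rintro ⟨f, hf⟩
  obtain ⟨x, y, hxy, h0, h1⟩ := W5 (f 0) (f 1)
  have hone := hf (Equiv.swap x y) (Subgroup.mem_top _) ?_
  · exact hxy (Equiv.swap_eq_one_iff.mp hone)
  · intro i
    fin_cases i
    · exact swap_image h0
    · exact swap_image h1

/-- The base size of a permutation group `G ≤ Sym(n)` in its action on the `k`-element
subsets of `{1, …, n}` (with the induced group required to be faithful on the subsets):
the least size of a tuple of `k`-subsets whose pointwise stabiliser in `G` is trivial. -/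
noncomputable def subsetsBaseSize (n k : ℕ) (G : Subgroup (Equiv.Perm (Fin n))) : ℕ :=
  sInf {c : ℕ | ∃ f : Fin c → {s : Finset (Fin n) // s.card = k},
    ∀ g ∈ G, (∀ i, Finset.image (⇑g) (f i).1 = (f i).1) → g = 1}

/-- Let `n ≥ 5`, write `n = 3m + δ` with `δ ∈ {0,1,2}`, let `2 ≤ k ≤ n/2`, and let `G` be
`A_n` or `S_n` acting on the `k`-element subsets of `{1, …, n}`. Then the base size is at
most `2m` if `δ ∈ {0,1}` and at most `2m + 1` if `δ = 2`; in particular it is at most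
`2n/3`. Moreover the base size is at most `n - 2`, with equality if and only if
`(n, k, G) = (6, 2, S₆)` or `(5, 2, S₅)`. -/
theorem subsetsBaseSize_bounds (n m δ k : ℕ) (hn : 5 ≤ n) (hδ : δ ≤ 2)
    (hnm : n = 3 * m + δ) (hk2 : 2 ≤ k) (hkn : 2 * k ≤ n)
    (G : Subgroup (Equiv.Perm (Fin n)))
    (hG : G = alternatingGroup (Fin n) ∨ G = ⊤) :
    (δ ≤ 1 → subsetsBaseSize n k G ≤ 2 * m) ∧
    (δ = 2 → subsetsBaseSize n k G ≤ 2 * m + 1) ∧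
    3 * subsetsBaseSize n k G ≤ 2 * n ∧
    subsetsBaseSize n k G ≤ n - 2 ∧
    (subsetsBaseSize n k G = n - 2 ↔
      (n = 6 ∧ k = 2 ∧ G = ⊤) ∨ (n = 5 ∧ k = 2 ∧ G = ⊤)) := by
  classical
  obtain ⟨hfam1, hfam2⟩ := exists_sep_family n m δ k hn hδ hnm hk2 hkn
  have hW2 : ∃ f : Fin (2*m+1) → {s : Finset (Fin n) // s.card = k},
      ∀ g ∈ G, (∀ i, Finset.image (⇑g) (f i).1 = (f i).1) → g = 1 := by
    obtain ⟨f, hf⟩ := hfam2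
    exact ⟨f, sep_mem G f hf⟩
  have h1 : δ ≤ 1 → subsetsBaseSize n k G ≤ 2*m := by
    intro h
    obtain ⟨f, hf⟩ := hfam1 h
    exact Nat.sInf_le ⟨f, sep_mem G f hf⟩
  have h2 : subsetsBaseSize n k G ≤ 2*m+1 := Nat.sInf_le hW2
  refine ⟨h1, ?_, ?_, ?_, ?_⟩
  · intro _
    exact h2
  · rcases (show δ ≤ 1 ∨ δ = 2 by omega) with hd | hd
    · have := h1 hd; omega
    · omega
  · rcases (show δ ≤ 1 ∨ δ = 2 by omega) with hd | hd
    · have := h1 hd; omega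
    · omega
  constructor
  · -- forward direction
    intro heq
    rcases (show δ ≤ 1 ∨ δ = 2 by omega) with hd | hd
    · have hb2m := h1 hd
      have hn6 : n = 6 ∧ m = 2 ∧ δ = 0 := by omega
      obtain ⟨hn6, hm2, hd0⟩ := hn6
      rcases (show k = 2 ∨ k = 3 by omega) with hk | hk
      · rcases hG with hGA | hGT
        · exfalso
          subst hn6 hk hGA
          have hle : subsetsBaseSize 6 2 (alternatingGroup (Fin 6)) ≤ 3 := by
            obtain ⟨f, hf⟩ := ex62A
            exact Nat.sInf_le ⟨f, hf⟩
          omega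
        · exact Or.inl ⟨hn6, hk, hGT⟩
      · exfalso
        subst hn6 hk
        have hle : subsetsBaseSize 6 3 G ≤ 3 := by
          obtain ⟨f, hf⟩ := ex63 G
          exact Nat.sInf_le ⟨f, hf⟩
        omega
    · have hn5 : n = 5 ∧ m = 1 := by omega
      obtain ⟨hn5, hm1⟩ := hn5
      have hk : k = 2 := by omega
      rcases hG with hGA | hGT
      · exfalso
        subst hn5 hk hGA
        have hle : subsetsBaseSize 5 2 (alternatingGroup (Fin 5)) ≤ 2 := by
          obtain ⟨f, hf⟩ := ex52A
          exact Nat.sInf_le ⟨f, hf⟩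
        omega
      · exact Or.inr ⟨hn5, hk, hGT⟩
  · -- backward direction
    rintro (⟨hn6, hk2', hGT⟩ | ⟨hn5, hk2', hGT⟩)
    · have hm2 : m = 2 ∧ δ = 0 := by omega
      have hble : subsetsBaseSize n k G ≤ 4 := by
        have := h1 (by omega); omega
      have hbge : 4 ≤ subsetsBaseSize n k G := by
        subst hn6 hk2' hGT
        by_contra hlt
        push_neg at hlt
        have hbmem : ∃ f : Fin (subsetsBaseSize 6 2 (⊤ : Subgroup (Equiv.Perm (Fin 6)))) →
            {s : Finset (Fin 6) // s.card = 2},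
            ∀ g ∈ (⊤ : Subgroup (Equiv.Perm (Fin 6))),
              (∀ i, Finset.image (⇑g) (f i).1 = (f i).1) → g = 1 := by
          exact Nat.sInf_mem (s := {c : ℕ | ∃ f : Fin c → {s : Finset (Fin 6) // s.card = 2},
            ∀ g ∈ (⊤ : Subgroup (Equiv.Perm (Fin 6))),
              (∀ i, Finset.image (⇑g) (f i).1 = (f i).1) → g = 1}) ⟨2*m+1, hW2⟩
        exact low6 (pad_mem _ (show subsetsBaseSize 6 2 ⊤ ≤ 3 by omega) (by omega) hbmem)
      omega
    · have hm1 : m = 1 ∧ δ = 2 := by omega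
      have hble : subsetsBaseSize n k G ≤ 3 := by omega
      have hbge : 3 ≤ subsetsBaseSize n k G := by
        subst hn5 hk2' hGT
        by_contra hlt
        push_neg at hlt
        have hbmem : ∃ f : Fin (subsetsBaseSize 5 2 (⊤ : Subgroup (Equiv.Perm (Fin 5)))) →
            {s : Finset (Fin 5) // s.card = 2},
            ∀ g ∈ (⊤ : Subgroup (Equiv.Perm (Fin 5))),
              (∀ i, Finset.image (⇑g) (f i).1 = (f i).1) → g = 1 := by
          exact Nat.sInf_mem (s := {c : ℕ | ∃ f : Fin c → {s : Finset (Fin 5) // s.card = 2},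
            ∀ g ∈ (⊤ : Subgroup (Equiv.Perm (Fin 5))),
              (∀ i, Finset.image (⇑g) (f i).1 = (f i).1) → g = 1}) ⟨2*m+1, hW2⟩
        exact low5 (pad_mem _ (show subsetsBaseSize 5 2 ⊤ ≤ 2 by omega) (by omega) hbmem)
      omega
end

section
/- Let G be a finite nonabelian simple group acting faithfully and primitively on a finite set Ω, such that every automorphism of G is inner (Out(G) = 1) and the image G^Ω of G is a maximal subgroup of the alternating group Alt(Ω). If, for some integer k with 1 ≤ k < |Ω| − 2, the action of G on Ω is k-transitive but not (k+1)-transitive, then (G^Ω)^{(k+1),Ω} = G^Ω while (G^Ω)^{(k),Ω} ≠ G^Ω. -/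
open Pointwise

open Equiv MulAction

-- extend an arbitrary tuple to an injective tuple covering it
private lemma exists_embedding_covering {Ω : Type*} [Fintype Ω] [DecidableEq Ω] {k : ℕ}
    (hk : k ≤ Fintype.card Ω) (f : Fin k → Ω) :
    ∃ e : Fin k ↪ Ω, ∀ i, ∃ j, e j = f i := by
  obtain ⟨t, hst, htc⟩ := Finset.exists_superset_card_eq
    (s := Finset.image f Finset.univ) (n := k)
    (Finset.card_image_le.trans (by simp)) hk
  let eq : {x // x ∈ t} ≃ Fin k := t.equivFin.trans (finCongr htc)
  refine ⟨⟨fun i => (eq.symm i : Ω), fun i j h => ?_⟩, fun i => ?_⟩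
  · have := eq.symm.injective (Subtype.ext h); exact this
  · have hm : f i ∈ t := hst (Finset.mem_image_of_mem f (Finset.mem_univ i))
    exact ⟨eq ⟨f i, hm⟩, by
      show ((eq.symm (eq ⟨f i, hm⟩) : Ω)) = f i; rw [Equiv.symm_apply_apply]⟩

private lemma exists_alt_map {Ω : Type*} [Fintype Ω] [DecidableEq Ω] {m : ℕ}
    (hm : m + 2 ≤ Fintype.card Ω) (x y : Fin m ↪ Ω) :
    ∃ σ ∈ alternatingGroup Ω, ∀ i, σ (x i) = y i := by
  classical
  have hcx : Fintype.card (Set.range x) = m := by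
    rw [Set.card_range_of_injective x.injective, Fintype.card_fin]
  have hcy : Fintype.card (Set.range y) = m := by
    rw [Set.card_range_of_injective y.injective, Fintype.card_fin]
  have hccx : Fintype.card ((Set.range x)ᶜ : Set Ω) = Fintype.card Ω - m := by
    rw [Fintype.card_compl_set, hcx]
  have hccy : Fintype.card ((Set.range y)ᶜ : Set Ω) = Fintype.card Ω - m := by
    rw [Fintype.card_compl_set, hcy]
  let ex : Fin m ≃ Set.range x := Equiv.ofInjective x x.injective
  let ey : Fin m ≃ Set.range y := Equiv.ofInjective y y.injective
  let fcompl : ((Set.range x)ᶜ : Set Ω) ≃ ((Set.range y)ᶜ : Set Ω) :=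
    Fintype.equivOfCardEq (hccx.trans hccy.symm)
  let σ0 : Equiv.Perm Ω := ((Equiv.Set.sumCompl (Set.range x)).symm.trans
    ((Equiv.sumCongr (ex.symm.trans ey) fcompl).trans (Equiv.Set.sumCompl (Set.range y))))
  have hσ0 : ∀ i, σ0 (x i) = y i := by
    intro i
    have h1 : (Equiv.Set.sumCompl (Set.range x)).symm (x i)
        = Sum.inl ⟨x i, ⟨i, rfl⟩⟩ :=
      Set.sumCompl_symm_apply_of_mem (show x i ∈ Set.range x from ⟨i, rfl⟩)
    have h2 : ex.symm ⟨x i, ⟨i, rfl⟩⟩ = i := by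
      apply ex.injective; simp [ex, Equiv.ofInjective_apply]
    simp [σ0, h1, h2, ex, ey, Equiv.ofInjective_apply]
  by_cases hσ : σ0 ∈ alternatingGroup Ω
  · exact ⟨σ0, hσ, hσ0⟩
  · have hcard2 : 1 < Fintype.card ((Set.range y)ᶜ : Set Ω) := by omega
    obtain ⟨a, b, hab⟩ := Fintype.exists_pair_of_one_lt_card hcard2
    refine ⟨Equiv.swap (a : Ω) (b : Ω) * σ0, ?_, ?_⟩
    · rw [Equiv.Perm.mem_alternatingGroup] at *
      rw [map_mul, Equiv.Perm.sign_swap (fun h => hab (Subtype.ext h))]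
      rcases Int.units_eq_one_or (Equiv.Perm.sign σ0) with h | h
      · exact absurd h hσ
      · rw [h]; rfl
    · intro i
      have hya : y i ≠ (a : Ω) := fun h => a.2 (h ▸ ⟨i, rfl⟩)
      have hyb : y i ≠ (b : Ω) := fun h => b.2 (h ▸ ⟨i, rfl⟩)
      rw [Equiv.Perm.mul_apply, hσ0, Equiv.swap_apply_of_ne_of_ne hya hyb]

private lemma centralizer_trivial {G : Type*} [Group G] {Ω : Type*} [MulAction G Ω]
    [FaithfulSMul G Ω] [Nonempty Ω]
    (hnonab : ∃ a b : G, a * b ≠ b * a)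
    (htrans : ∀ x y : Ω, ∃ g : G, g • x = y)
    (hprim : ∀ B : Set Ω, (∀ g : G, g • B = B ∨ Disjoint (g • B) B) →
      B.Subsingleton ∨ B = Set.univ)
    (c : Equiv.Perm Ω)
    (hc : ∀ g : G, c * MulAction.toPermHom G Ω g = MulAction.toPermHom G Ω g * c) :
    c = 1 := by
  classical
  obtain ⟨ω0⟩ := ‹Nonempty Ω›
  have key : ∀ n : ℤ, ∀ g : G, ∀ ω : Ω, (c ^ n) (g • ω) = g • ((c ^ n) ω) := by
    intro n g ω
    have h : Commute c (MulAction.toPermHom G Ω g) := hc g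
    have h2 := congrArg (fun p : Equiv.Perm Ω => p ω) (h.zpow_left n).eq
    simpa [Equiv.Perm.mul_apply] using h2
  set B : Set Ω := Set.range (fun n : ℤ => (c ^ n) ω0) with hB
  have horb : ∀ g : G, g • B = Set.range (fun n : ℤ => (c ^ n) (g • ω0)) := by
    intro g
    ext ω
    simp only [Set.mem_smul_set, Set.mem_range, hB]
    constructor
    · rintro ⟨ω', ⟨n, rfl⟩, rfl⟩
      exact ⟨n, key n g ω0⟩
    · rintro ⟨n, rfl⟩
      exact ⟨(c ^ n) ω0, ⟨n, rfl⟩, (key n g ω0).symm⟩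
  have hblock : ∀ g : G, g • B = B ∨ Disjoint (g • B) B := by
    intro g
    by_cases hdis : Disjoint (g • B) B
    · exact Or.inr hdis
    · left
      rw [Set.not_disjoint_iff] at hdis
      obtain ⟨ω, hω1, hω2⟩ := hdis
      rw [horb] at hω1
      obtain ⟨n, hn0⟩ := hω1
      obtain ⟨m, hm0⟩ := hω2
      have hn : (c ^ n) (g • ω0) = ω := hn0
      have hm : (c ^ m) ω0 = ω := hm0
      have hgω0 : g • ω0 = (c ^ (m - n)) ω0 := by
        have h1 : (c ^ (-n) * c ^ n) (g • ω0) = (c ^ (-n) * c ^ m) ω0 := by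
          simp only [Equiv.Perm.mul_apply]
          rw [hn, hm]
        rwa [← zpow_add, ← zpow_add, neg_add_cancel, zpow_zero, neg_add_eq_sub,
          Equiv.Perm.one_apply] at h1
      rw [horb]
      ext ω
      simp only [Set.mem_range, hB]
      constructor
      · rintro ⟨j, rfl⟩
        refine ⟨j + (m - n), ?_⟩
        show (c ^ (j + (m - n))) ω0 = (c ^ j) (g • ω0)
        rw [hgω0, ← Equiv.Perm.mul_apply, ← zpow_add]
      · rintro ⟨j, rfl⟩
        refine ⟨j - (m - n), ?_⟩
        show (c ^ (j - (m - n))) (g • ω0) = (c ^ j) ω0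
        have he : j - (m - n) + (m - n) = j := by ring
        rw [hgω0, ← Equiv.Perm.mul_apply, ← zpow_add, he]
  have semireg : c ω0 = ω0 → c = 1 := by
    intro h0
    ext ω
    obtain ⟨g, hg⟩ := htrans ω0 ω
    have hk := key 1 g ω0
    simp only [zpow_one] at hk
    rw [Equiv.Perm.one_apply, ← hg, hk, h0]
  rcases hprim B hblock with hsub | huniv
  · exact semireg (hsub ⟨1, by simp⟩ ⟨0, by simp⟩)
  · exfalso
    have sreg : ∀ g : G, g • ω0 = ω0 → g = 1 := by
      intro g hg
      refine eq_of_smul_eq_smul (M := G) (α := Ω) fun ω => ?_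
      have hω : ω ∈ B := huniv ▸ Set.mem_univ ω
      obtain ⟨n, rfl⟩ := hω
      show g • (c ^ n) ω0 = (1 : G) • (c ^ n) ω0
      rw [← key n g ω0, hg, one_smul]
    obtain ⟨a, b, hab⟩ := hnonab
    have ha1 : a ≠ 1 := fun h => hab (by rw [h, one_mul, mul_one])
    set B' : Set Ω := Set.range (fun n : ℤ => a ^ n • ω0) with hB'
    have horb' : ∀ g : G, g • B' = Set.range (fun n : ℤ => (g * a ^ n) • ω0) := by
      intro g
      ext ω
      simp only [Set.mem_smul_set, Set.mem_range, hB']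
      constructor
      · rintro ⟨ω', ⟨n, rfl⟩, rfl⟩
        exact ⟨n, mul_smul g (a ^ n) ω0⟩
      · rintro ⟨n, rfl⟩
        exact ⟨a ^ n • ω0, ⟨n, rfl⟩, (mul_smul g (a ^ n) ω0).symm⟩
    have hblock' : ∀ g : G, g • B' = B' ∨ Disjoint (g • B') B' := by
      intro g
      by_cases hdis : Disjoint (g • B') B'
      · exact Or.inr hdis
      · left
        rw [Set.not_disjoint_iff] at hdis
        obtain ⟨ω, hω1, hω2⟩ := hdis
        rw [horb'] at hω1
        obtain ⟨n, hn0⟩ := hω1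
        obtain ⟨m, hm0⟩ := hω2
        have hn : (g * a ^ n) • ω0 = ω := hn0
        have hm : a ^ m • ω0 = ω := hm0
        have h0 : (a ^ (-m) * (g * a ^ n)) • ω0 = ω0 := by
          rw [mul_smul, hn, ← hm, ← mul_smul, ← zpow_add, neg_add_cancel, zpow_zero, one_smul]
        have h1 := sreg _ h0
        have h2 : g * a ^ n = a ^ m := by
          have h3 := congrArg (fun z => a ^ m * z) h1
          simp only [mul_one] at h3
          rw [← mul_assoc, ← zpow_add, add_neg_cancel, zpow_zero, one_mul] at h3
          exact h3
        have hg : g = a ^ (m - n) := by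
          have h4 := eq_mul_inv_of_mul_eq h2
          rwa [← zpow_neg, ← zpow_add, ← sub_eq_add_neg] at h4
        rw [horb']
        ext ω
        simp only [Set.mem_range, hB']
        constructor
        · rintro ⟨j, rfl⟩
          refine ⟨m - n + j, ?_⟩
          show a ^ (m - n + j) • ω0 = (g * a ^ j) • ω0
          rw [hg, zpow_add]
        · rintro ⟨j, rfl⟩
          refine ⟨j - (m - n), ?_⟩
          show (g * a ^ (j - (m - n))) • ω0 = a ^ j • ω0
          have he : m - n + (j - (m - n)) = j := by ring
          rw [hg, ← zpow_add, he]
    rcases hprim B' hblock' with hsub' | huniv'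
    · refine ha1 (sreg a (hsub' ⟨1, by simp⟩ ⟨0, by simp⟩))
    · have hb : b • ω0 ∈ B' := huniv' ▸ Set.mem_univ _
      obtain ⟨n, hn0⟩ := hb
      have hn : a ^ n • ω0 = b • ω0 := hn0
      have h0 : (a ^ (-n) * b) • ω0 = ω0 := by
        rw [mul_smul, ← hn, ← mul_smul, ← zpow_add, neg_add_cancel, zpow_zero, one_smul]
      have hbn : b = a ^ n := by
        have h1 := sreg _ h0
        rw [zpow_neg] at h1
        exact (inv_mul_eq_one.mp h1).symm
      exact hab (by rw [hbn]; exact (Commute.self_zpow a n).eq)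
private lemma mem_range_of_normalizes {G : Type*} [Group G] [Finite G] {Ω : Type*}
    [MulAction G Ω] [FaithfulSMul G Ω] [Nonempty Ω]
    (hnonab : ∃ a b : G, a * b ≠ b * a)
    (htrans : ∀ x y : Ω, ∃ g : G, g • x = y)
    (hprim : ∀ B : Set Ω, (∀ g : G, g • B = B ∨ Disjoint (g • B) B) →
      B.Subsingleton ∨ B = Set.univ)
    (hinner : ∀ f : G ≃* G, ∃ g : G, ∀ x : G, f x = g * x * g⁻¹)
    (τ : Equiv.Perm Ω)
    (hτ : ∀ g : G, τ * MulAction.toPermHom G Ω g * τ⁻¹ ∈ (MulAction.toPermHom G Ω).range) :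
    τ ∈ (MulAction.toPermHom G Ω).range := by
  classical
  set π := MulAction.toPermHom G Ω with hπ
  have hπinj : Function.Injective π := by
    intro g h hf
    apply eq_of_smul_eq_smul (M := G) (α := Ω)
    intro ω
    have := congrArg (fun p : Equiv.Perm Ω => p ω) hf
    simpa [hπ] using this
  have hτ' : ∀ g : G, ∃ x : G, π x = τ * π g * τ⁻¹ :=
    fun g => MonoidHom.mem_range.mp (hτ g)
  choose φ hφ using hτ'
  have hom : ∀ g h : G, φ (g * h) = φ g * φ h := by
    intro g h
    apply hπinj
    rw [map_mul, hφ, hφ, hφ, map_mul]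
    group
  have hinj : Function.Injective φ := by
    intro g h hgh
    apply hπinj
    have h2 := congrArg π hgh
    rw [hφ, hφ] at h2
    exact mul_left_cancel (mul_right_cancel h2)
  have hbij := Finite.injective_iff_bijective.mp hinj
  obtain ⟨g0, hg0⟩ := hinner (MulEquiv.ofBijective (MonoidHom.mk' φ hom) hbij)
  have hφx : ∀ g : G, φ g = g0 * g * g0⁻¹ := fun g => hg0 g
  have hc : ∀ g : G, ((π g0)⁻¹ * τ) * π g = π g * ((π g0)⁻¹ * τ) := by
    intro g
    have h1 : τ * π g * τ⁻¹ = π g0 * π g * (π g0)⁻¹ := by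
      rw [← hφ g, hφx g, map_mul, map_mul, map_inv]
    have h2 : τ * π g = π g0 * π g * (π g0)⁻¹ * τ := by
      rw [← h1]; group
    rw [mul_assoc, h2]; group
  have hc1 := centralizer_trivial hnonab htrans hprim ((π g0)⁻¹ * τ) hc
  exact ⟨g0, inv_mul_eq_one.mp hc1⟩

/-- Let `G` be a finite nonabelian simple group acting faithfully and primitively on a
finite set `Ω`, such that every automorphism of `G` is inner and the induced group `G^Ω` is
a maximal subgroup of `Alt(Ω)`. If, for some `1 ≤ k < |Ω| - 2`, the action is `k`-transitive
but not `(k+1)`-transitive, then `G^Ω` equals its own `(k+1)`-closure but not its own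
`k`-closure. -/
theorem kClosure_of_maximal_in_alternating {G : Type*} [Group G] [Finite G]
    (hnonab : ∃ a b : G, a * b ≠ b * a) (hsimple : IsSimpleGroup G)
    {Ω : Type*} [Fintype Ω] [DecidableEq Ω] [MulAction G Ω] [FaithfulSMul G Ω]
    (htrans : ∀ x y : Ω, ∃ g : G, g • x = y)
    (hprim : ∀ B : Set Ω, (∀ g : G, g • B = B ∨ Disjoint (g • B) B) →
      B.Subsingleton ∨ B = Set.univ)
    (hinner : ∀ f : G ≃* G, ∃ g : G, ∀ x : G, f x = g * x * g⁻¹)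
    (hle : (MulAction.toPermHom G Ω).range ≤ alternatingGroup Ω)
    (hne : (MulAction.toPermHom G Ω).range ≠ alternatingGroup Ω)
    (hmax : ∀ H : Subgroup (Equiv.Perm Ω), (MulAction.toPermHom G Ω).range ≤ H →
      H ≤ alternatingGroup Ω →
      H = (MulAction.toPermHom G Ω).range ∨ H = alternatingGroup Ω)
    (k : ℕ) (hk1 : 1 ≤ k) (hk2 : k < Fintype.card Ω - 2)
    (hktrans : ∀ x y : Fin k ↪ Ω, ∃ g : G, ∀ i, g • x i = y i)
    (hnotktrans : ¬ ∀ x y : Fin (k + 1) ↪ Ω, ∃ g : G, ∀ i, g • x i = y i) :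
    kClosure ((MulAction.toPermHom G Ω).range : Set (Equiv.Perm Ω)) (k + 1) =
      ((MulAction.toPermHom G Ω).range : Set (Equiv.Perm Ω)) ∧
    kClosure ((MulAction.toPermHom G Ω).range : Set (Equiv.Perm Ω)) k ≠
      ((MulAction.toPermHom G Ω).range : Set (Equiv.Perm Ω)) := by
  classical
  have hcard : k + 2 < Fintype.card Ω := by omega
  have : Nonempty Ω := Fintype.card_pos_iff.mp (by omega)
  set π := MulAction.toPermHom G Ω with hπ
  set R := π.range with hR
  -- the k-closure is everything, since the action is k-transitive
  have hKuniv : kClosure (R : Set (Equiv.Perm Ω)) k = Set.univ := by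
    ext g
    simp only [Set.mem_univ, iff_true]
    intro f
    obtain ⟨e, he⟩ := exists_embedding_covering (by omega) f
    obtain ⟨a, ha⟩ := hktrans e ⟨g ∘ e, g.injective.comp e.injective⟩
    refine ⟨π a, SetLike.mem_coe.mpr ⟨a, rfl⟩, fun i => ?_⟩
    obtain ⟨j, hj⟩ := he i
    rw [← hj]
    exact (ha j).symm
  have hRneuniv : (R : Set (Equiv.Perm Ω)) ≠ Set.univ := by
    intro h
    obtain ⟨a, b, hab⟩ := Fintype.exists_pair_of_one_lt_card (α := Ω) (by omega)
    have hmem : Equiv.swap a b ∈ R := by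
      rw [← SetLike.mem_coe, h]; trivial
    have h2 := hle hmem
    rw [Equiv.Perm.mem_alternatingGroup, Equiv.Perm.sign_swap hab] at h2
    exact absurd h2 (by decide)
  -- the (k+1)-closure as a subgroup
  let H : Subgroup (Equiv.Perm Ω) :=
    { carrier := kClosure (R : Set (Equiv.Perm Ω)) (k + 1)
      one_mem' := fun f => ⟨1, SetLike.mem_coe.mpr (one_mem R), fun _ => rfl⟩
      mul_mem' := by
        intro g1 g2 h1 h2 f
        obtain ⟨b2, hb2, e2⟩ := h2 f
        obtain ⟨b1, hb1, e1⟩ := h1 (fun i => g2 (f i))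
        refine ⟨b1 * b2, SetLike.mem_coe.mpr
          (mul_mem (SetLike.mem_coe.mp hb1) (SetLike.mem_coe.mp hb2)), fun i => ?_⟩
        show g1 (g2 (f i)) = b1 (b2 (f i))
        rw [← e2 i, ← e1 i]
      inv_mem' := by
        intro g hg f
        obtain ⟨b, hb, e⟩ := hg (fun i => g⁻¹ (f i))
        refine ⟨b⁻¹, SetLike.mem_coe.mpr (inv_mem (SetLike.mem_coe.mp hb)), fun i => ?_⟩
        show g⁻¹ (f i) = b⁻¹ (f i)
        have h3 := e i
        rw [show g (g⁻¹ (f i)) = f i from g.apply_symm_apply (f i)] at h3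
        apply b.injective
        rw [show b (b⁻¹ (f i)) = f i from b.apply_symm_apply (f i)]
        exact h3.symm }
  have hRH : R ≤ H := by
    intro r hr
    exact fun f => ⟨r, SetLike.mem_coe.mpr hr, fun _ => rfl⟩
  -- the alternating group is not contained in H
  push_neg at hnotktrans
  obtain ⟨x, y, hxy⟩ := hnotktrans
  have hAltnle : ¬ alternatingGroup Ω ≤ H := by
    intro hAlt
    obtain ⟨σ, hσA, hσ⟩ := exists_alt_map (m := k + 1) (by omega) x y
    have hσH : σ ∈ kClosure (R : Set (Equiv.Perm Ω)) (k + 1) := hAlt hσA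
    obtain ⟨h, hh, e⟩ := hσH (⇑x)
    obtain ⟨g, hg⟩ := SetLike.mem_coe.mp hh
    obtain ⟨i, hi⟩ := hxy g
    apply hi
    have h1 : π g (x i) = σ (x i) := by rw [hg, ← e i]
    rw [hσ i] at h1
    exact h1
  have hinf : H ⊓ alternatingGroup Ω = R := by
    rcases hmax (H ⊓ alternatingGroup Ω) (le_inf hRH hle) inf_le_right with h | h
    · exact h
    · exact absurd ((le_of_eq h.symm).trans inf_le_left) hAltnle
  have hHR : ∀ τ : Equiv.Perm Ω, τ ∈ H → τ ∈ R := by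
    intro τ hτH
    apply mem_range_of_normalizes hnonab htrans hprim hinner
    intro g
    have h1 : τ * π g * τ⁻¹ ∈ H := mul_mem (mul_mem hτH (hRH ⟨g, rfl⟩)) (inv_mem hτH)
    have h2 : τ * π g * τ⁻¹ ∈ alternatingGroup Ω := by
      have hg : π g ∈ alternatingGroup Ω := hle ⟨g, rfl⟩
      rw [Equiv.Perm.mem_alternatingGroup] at hg ⊢
      simp [hg]
    show τ * π g * τ⁻¹ ∈ R
    rw [← hinf]
    exact Subgroup.mem_inf.mpr ⟨h1, h2⟩
  constructor
  · ext g
    constructor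
    · intro hg
      exact SetLike.mem_coe.mpr (hHR g hg)
    · intro hg
      exact hRH (SetLike.mem_coe.mp hg) 
  · rw [hKuniv]
    exact fun h => hRneuniv h.symm
end
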